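/- arXiv:1702.07574 — 5 statements merged into one kernel-verified Lean document; each statement's English description precedes it below -/
import Mathlib

section
/- Every k-clean monomial ideal is clean. That is, if I ⊆ S = K[x_1,…,x_n] is a monomial ideal that is k-clean for some integer k ≥ 0, then S/I admits a clean multigraded prime filtration. -/
open MvPolynomial

/-- A monomial ideal: an ideal generated by monomials. -/
def IsMonomialIdeal {K : Type*} [Field K] {σ : Type*}
    (I : Ideal (MvPolynomial σ K)) : Prop :=
  ∃ G : Set (σ →₀ ℕ), I = Ideal.span ((fun a : σ →₀ ℕ => (monomial a (1 : K))) '' G)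

/-- `u = x^a` is a cleaner monomial of `I`: `u` is a non-unit monomial not in `I`
with `min(I + Su) ⊆ min(I)`. -/
def IsCleaner {K : Type*} [Field K] {σ : Type*}
    (I : Ideal (MvPolynomial σ K)) (a : σ →₀ ℕ) : Prop :=
  a ≠ 0 ∧ (monomial a (1 : K)) ∉ I ∧
    (I + Ideal.span {(monomial a (1 : K))}).minimalPrimes ⊆ I.minimalPrimes

/-- `I` has no embedded prime ideals: every associated prime of `S/I` is a minimal prime of `I`. -/
def NoEmbeddedPrimes {K : Type*} [Field K] {σ : Type*}
    (I : Ideal (MvPolynomial σ K)) : Prop :=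
  ∀ P ∈ associatedPrimes (MvPolynomial σ K) (MvPolynomial σ K ⧸ I), P ∈ I.minimalPrimes

/-- `I` is `k`-clean: `I` is prime, or `I` has no embedded primes and there is a cleaner
monomial `u ∉ I` with `|supp u| ≤ k+1` such that `I : u` and `I + Su` are `k`-clean. -/
inductive KClean (K : Type*) [Field K] (σ : Type*) (k : ℕ) :
    Ideal (MvPolynomial σ K) → Prop
  | prime (I : Ideal (MvPolynomial σ K)) (h : I.IsPrime) : KClean K σ k I
  | step (I : Ideal (MvPolynomial σ K)) (a : σ →₀ ℕ)
      (hne : NoEmbeddedPrimes I) (hcl : IsCleaner I a)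
      (hsupp : a.support.card ≤ k + 1)
      (hcolon : KClean K σ k (Submodule.colon I (Ideal.span {(monomial a (1 : K))})))
      (hsum : KClean K σ k (I + Ideal.span {(monomial a (1 : K))})) : KClean K σ k I

/-- A submodule of `S/I` is multigraded iff it is generated by images of monomials. -/
def IsMultigradedSubmodule {K : Type*} [Field K] {σ : Type*}
    (I : Ideal (MvPolynomial σ K)) (N : Submodule (MvPolynomial σ K) (MvPolynomial σ K ⧸ I)) :
    Prop :=
  ∃ A : Set (σ →₀ ℕ),
    N = Submodule.span (MvPolynomial σ K)
      ((fun a : σ →₀ ℕ => Ideal.Quotient.mk I (monomial a (1 : K))) '' A)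

/-- `I` is clean: `S/I` admits a multigraded prime filtration
`0 = M₀ ⊂ M₁ ⊂ ⋯ ⊂ M_r = S/I` whose factors `M_i/M_{i-1}` are isomorphic to `S/P_i`
(with a multidegree shift) for minimal primes `P_i` of `I`. -/
def IsClean {K : Type*} [Field K] {σ : Type*} (I : Ideal (MvPolynomial σ K)) : Prop :=
  ∃ (r : ℕ) (M : Fin (r + 1) → Submodule (MvPolynomial σ K) (MvPolynomial σ K ⧸ I)),
    M 0 = ⊥ ∧ M (Fin.last r) = ⊤ ∧ StrictMono M ∧
    (∀ i, IsMultigradedSubmodule I (M i)) ∧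
    (∀ i : Fin r, ∃ P ∈ I.minimalPrimes,
      Nonempty ((↥(M i.succ) ⧸ (Submodule.comap (M i.succ).subtype (M i.castSucc)))
        ≃ₗ[MvPolynomial σ K] (MvPolynomial σ K ⧸ P)))

set_option maxHeartbeats 1000000

section Helpers

/-- Multiplication by `u` gives an injective linear map `R/(I:u) → R/I`. -/
lemma exists_mul_map {R : Type*} [CommRing R] (I : Ideal R) (u : R) :
    ∃ φ : (R ⧸ Submodule.colon I (Ideal.span {u})) →ₗ[R] R ⧸ I,
      Function.Injective φ ∧
      LinearMap.range φ = Submodule.map I.mkQ (Ideal.span {u}) ∧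
      ∀ x : R, φ (Submodule.Quotient.mk x) = Submodule.Quotient.mk (u * x) := by
  set c := Submodule.colon I (Ideal.span {u}) with hc
  set m : R →ₗ[R] R := u • LinearMap.id with hm
  have hker : LinearMap.ker (I.mkQ ∘ₗ m) = c := by
    ext r
    simp only [LinearMap.mem_ker, LinearMap.comp_apply, hm, LinearMap.smul_apply,
      LinearMap.id_apply, Submodule.mkQ_apply, Submodule.Quotient.mk_eq_zero, smul_eq_mul,
      hc, Ideal.mem_colon_span_singleton]
    rw [mul_comm]
  refine ⟨Submodule.liftQ c (I.mkQ ∘ₗ m) hker.ge, ?_, ?_, ?_⟩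
  · rw [← LinearMap.ker_eq_bot]
    exact Submodule.ker_liftQ_eq_bot _ _ _ hker.le
  · rw [Submodule.range_liftQ, LinearMap.range_comp]
    congr 1
    ext y
    simp only [LinearMap.mem_range, hm, LinearMap.smul_apply, LinearMap.id_apply, smul_eq_mul,
      Ideal.mem_span_singleton']
    exact ⟨fun ⟨x, hx⟩ => ⟨x, by rw [mul_comm]; exact hx⟩, fun ⟨x, hx⟩ => ⟨x, by rw [mul_comm]; exact hx⟩⟩
  · intro x
    rw [Submodule.liftQ_apply]
    simp [hm, smul_eq_mul]

/-- The projection `R/I → R/J` for `I ≤ J`. -/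
lemma exists_proj_map {R : Type*} [CommRing R] (I J : Ideal R) (hIJ : I ≤ J) :
    ∃ π : (R ⧸ I) →ₗ[R] R ⧸ J,
      Function.Surjective π ∧
      LinearMap.ker π = Submodule.map I.mkQ J ∧
      ∀ x : R, π (Submodule.Quotient.mk x) = Submodule.Quotient.mk x := by
  refine ⟨Submodule.mapQ I J LinearMap.id hIJ, ?_, ?_, fun x => Submodule.mapQ_apply _ _ _ x⟩
  · intro y
    obtain ⟨x, rfl⟩ := Submodule.Quotient.mk_surjective J y
    exact ⟨Submodule.Quotient.mk x, Submodule.mapQ_apply _ _ _ x⟩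
  · ext y
    obtain ⟨x, rfl⟩ := Submodule.Quotient.mk_surjective I y
    simp only [LinearMap.mem_ker, Submodule.mapQ_apply, LinearMap.id_apply,
      Submodule.Quotient.mk_eq_zero]
    constructor
    · intro h
      exact ⟨x, h, rfl⟩
    · rintro ⟨j, hj, hjx⟩
      have hsub : j - x ∈ I := by
        rw [← Submodule.Quotient.eq]
        exact hjx
      have : x = j - (j - x) := by ring
      rw [this]
      exact Submodule.sub_mem J hj (hIJ hsub)

/-- Transport of a subquotient along a linear map. -/
lemma quot_factor_equiv {R A B : Type*} [CommRing R] [AddCommGroup A] [Module R A]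
    [AddCommGroup B] [Module R B] (f : A →ₗ[R] B)
    {p q : Submodule R A} {p' q' : Submodule R B}
    (hq : Submodule.map f q = q')
    (hp : ∀ x ∈ q, (f x ∈ p' ↔ x ∈ p)) :
    Nonempty ((↥q ⧸ (p.comap q.subtype)) ≃ₗ[R] (↥q' ⧸ (p'.comap q'.subtype))) := by
  have hmem : ∀ x : A, x ∈ q → f x ∈ q' := fun x hx => hq ▸ Submodule.mem_map_of_mem hx
  set g : q →ₗ[R] q' := f.restrict hmem with hg
  set h : q →ₗ[R] (↥q' ⧸ (p'.comap q'.subtype)) := (p'.comap q'.subtype).mkQ ∘ₗ g with hh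
  have hsurj : Function.Surjective h := by
    intro z
    obtain ⟨y, rfl⟩ := Submodule.Quotient.mk_surjective _ z
    have hy : (y : B) ∈ Submodule.map f q := hq.symm ▸ y.2
    obtain ⟨x, hx, hfx⟩ := hy
    refine ⟨⟨x, hx⟩, ?_⟩
    simp only [hh, LinearMap.comp_apply, Submodule.mkQ_apply]
    congr 1
    exact Subtype.ext (by simpa [hg, LinearMap.restrict_apply] using hfx)
  have hker : LinearMap.ker h = p.comap q.subtype := by
    ext x
    simp only [hh, LinearMap.mem_ker, LinearMap.comp_apply, Submodule.mkQ_apply,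
      Submodule.Quotient.mk_eq_zero, Submodule.mem_comap, Submodule.subtype_apply]
    have : (g x : B) = f x := by simp [hg, LinearMap.restrict_apply]
    rw [show ((g x : B) ∈ p') = ((g x : q').1 ∈ p') from rfl] at *
    rw [this]
    exact hp x x.2
  exact ⟨(Submodule.quotEquivOfEq _ _ hker.symm).trans (h.quotKerEquivOfSurjective hsurj)⟩

/-- The top/bottom factor of a module. -/
lemma top_bot_factor_equiv {R M : Type*} [CommRing R] [AddCommGroup M] [Module R M] :
    Nonempty ((↥(⊤ : Submodule R M) ⧸
      ((⊥ : Submodule R M).comap (⊤ : Submodule R M).subtype)) ≃ₗ[R] M) := by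
  have h : ((⊥ : Submodule R M).comap (⊤ : Submodule R M).subtype) = ⊥ := by
    ext x; simp
  exact ⟨(Submodule.quotEquivOfEqBot _ h).trans Submodule.topEquiv⟩

lemma colon_isPrimary {R : Type*} [CommRing R] {Q : Ideal R} (hQ : Q.IsPrimary)
    {x : R} (hx : x ∉ Q) :
    (Submodule.colon Q (Ideal.span {x})).IsPrimary ∧
      (Submodule.colon Q (Ideal.span {x})).radical = Q.radical := by
  have hle : Q ≤ Submodule.colon Q (Ideal.span {x}) := fun r hr =>
    Ideal.mem_colon_span_singleton.mpr (Ideal.mul_mem_right x Q hr)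
  have hrad : (Submodule.colon Q (Ideal.span {x})).radical = Q.radical := by
    refine le_antisymm ?_ (Ideal.radical_mono hle)
    intro y hy
    obtain ⟨m, hm⟩ := hy
    rw [Ideal.mem_colon_span_singleton, mul_comm] at hm
    rcases (Ideal.isPrimary_iff.mp hQ).2 hm with h | h
    · exact absurd h hx
    · exact Ideal.mem_radical_of_pow_mem h
  refine ⟨Ideal.isPrimary_iff.mpr ⟨?_, ?_⟩, hrad⟩
  · intro htop
    have : (1 : R) ∈ Submodule.colon Q (Ideal.span {x}) := htop ▸ Submodule.mem_top
    rw [Ideal.mem_colon_span_singleton, one_mul] at this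
    exact hx this
  · intro p q hpq
    rw [Ideal.mem_colon_span_singleton] at hpq
    have : (p * x) * q ∈ Q := by rw [show p * x * q = p * q * x by ring]; exact hpq
    rcases (Ideal.isPrimary_iff.mp hQ).2 this with h | h
    · exact Or.inl (Ideal.mem_colon_span_singleton.mpr h)
    · exact Or.inr (hrad ▸ h)

/-- Every minimal prime over `J` is an associated prime of `R ⧸ J` (Noetherian ring). -/
lemma minimalPrimes_subset_associatedPrimes {R : Type*} [CommRing R] [IsNoetherianRing R]
    {J P : Ideal R} (hP : P ∈ J.minimalPrimes) :
    P ∈ associatedPrimes R (R ⧸ J) := by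
  classical
  obtain ⟨t, hinf, hprim, hrad, hirr⟩ : ∃ t : Finset (Ideal R), Submodule.IsMinimalPrimaryDecomposition J t :=
    Ideal.IsLasker.minimal (Ideal.isLasker R R) J
  obtain ⟨hPp, hJP⟩ := hP.1
  obtain ⟨Q, hQt, hQP⟩ := (Ideal.IsPrime.inf_le' hPp).mp (le_of_eq_of_le hinf hJP)
  have hQprim : Q.IsPrimary := hprim hQt
  have hJQ : J ≤ Q := hinf ▸ Finset.inf_le hQt
  have hradP : Ideal.radical Q = P := by
    have h1 : Ideal.radical Q ≤ P := hPp.radical_le_iff.mpr hQP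
    exact le_antisymm h1 (hP.2 ⟨Ideal.isPrime_radical hQprim, le_trans hJQ Ideal.le_radical⟩ h1)
  have hne : ¬ (t.erase Q).inf id ≤ Q := hirr hQt
  obtain ⟨x, hx1, hx2⟩ := SetLike.not_le_iff_exists.mp hne
  -- J : x = Q : x
  have hJeq : J = Q ⊓ (t.erase Q).inf id := by
    conv_lhs => rw [← hinf, ← Finset.insert_erase hQt]
    rw [Finset.inf_insert]
    rfl
  have hJx : Submodule.colon J (Ideal.span {x}) = Submodule.colon Q (Ideal.span {x}) := by
    ext r
    simp only [Ideal.mem_colon_span_singleton]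
    constructor
    · intro h
      rw [hJeq] at h
      exact h.1
    · intro h
      rw [hJeq, Submodule.mem_inf]
      exact ⟨h, Ideal.mul_mem_left _ r hx1⟩
  obtain ⟨hcp, hcr⟩ := colon_isPrimary hQprim hx2
  obtain ⟨φ, hinj, -, -⟩ := exists_mul_map J x
  apply associatedPrimes.subset_of_injective hinj
  rw [hJx]
  have := associatedPrimes.eq_singleton_of_isPrimary hcp
  have hmem : P ∈ associatedPrimes R (R ⧸ Submodule.colon Q (Ideal.span {x})) := by
    rw [this, hcr, hradP]
    rfl
  exact hmem

lemma factor_congr {R Q : Type*} [CommRing R] [AddCommGroup Q] [Module R Q]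
    {A A' B B' : Submodule R Q} (h1 : A = A') (h2 : B = B') :
    Nonempty ((↥A ⧸ Submodule.comap A.subtype B) ≃ₗ[R] (↥A' ⧸ Submodule.comap A'.subtype B')) := by
  subst h1; subst h2; exact ⟨LinearEquiv.refl _ _⟩


end Helpers

section Main

variable {K : Type*} [Field K]


lemma multigraded_top {σ : Type*} (I : Ideal (MvPolynomial σ K)) :
    IsMultigradedSubmodule I (⊤ : Submodule (MvPolynomial σ K) (MvPolynomial σ K ⧸ I)) := by
  refine ⟨Set.univ, ?_⟩
  have hsp : Submodule.span (MvPolynomial σ K)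
      ((fun a : σ →₀ ℕ => Ideal.Quotient.mk I (monomial a (1 : K))) '' Set.univ) = ⊤ := by
    rw [Submodule.eq_top_iff']
    intro y
    obtain ⟨x, rfl⟩ := Submodule.Quotient.mk_surjective _ y
    have h1 : Ideal.Quotient.mk I (monomial (0 : σ →₀ ℕ) (1 : K)) ∈
        ((fun a : σ →₀ ℕ => Ideal.Quotient.mk I (monomial a (1 : K))) '' Set.univ) :=
      ⟨0, trivial, rfl⟩
    have h2 := Submodule.smul_mem _ x (Submodule.subset_span h1)
    have h3 : x • Ideal.Quotient.mk I (monomial (0 : σ →₀ ℕ) (1 : K)) =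
        Submodule.Quotient.mk x := by
      rw [← Ideal.Quotient.mk_eq_mk, ← Submodule.Quotient.mk_smul]
      congr 1
      rw [monomial_zero', C_1, smul_eq_mul, mul_one]
    rwa [h3] at h2
  exact hsp.symm

lemma multigraded_bot {σ : Type*} (I : Ideal (MvPolynomial σ K)) :
    IsMultigradedSubmodule I (⊥ : Submodule (MvPolynomial σ K) (MvPolynomial σ K ⧸ I)) :=
  ⟨∅, by rw [Set.image_empty, Submodule.span_empty]⟩

lemma isClean_of_prime {σ : Type*} {I : Ideal (MvPolynomial σ K)}
    (hI : I.IsPrime) : IsClean I := by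
  classical
  have hone : (Ideal.Quotient.mk I 1 : MvPolynomial σ K ⧸ I) ≠ 0 := by
    rw [Ne, Ideal.Quotient.eq_zero_iff_mem]
    exact fun h => hI.ne_top (Ideal.eq_top_iff_one I |>.mpr h)
  set M : Fin 2 → Submodule (MvPolynomial σ K) (MvPolynomial σ K ⧸ I) :=
    fun i => if i = 0 then ⊥ else ⊤ with hMdef
  have hM0 : M 0 = ⊥ := if_pos rfl
  have hM1 : M 1 = ⊤ := if_neg (by decide)
  have hbotlt : (⊥ : Submodule (MvPolynomial σ K) (MvPolynomial σ K ⧸ I)) < ⊤ := by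
    refine lt_of_le_of_ne bot_le fun h => hone ?_
    have : Ideal.Quotient.mk I 1 ∈ (⊤ : Submodule (MvPolynomial σ K) (MvPolynomial σ K ⧸ I)) :=
      Submodule.mem_top
    rw [← h] at this
    exact (Submodule.mem_bot _).mp this
  refine ⟨1, M, hM0, ?_, ?_, ?_, ?_⟩
  · show M 1 = ⊤
    exact hM1
  · refine Fin.strictMono_iff_lt_succ.mpr fun i => ?_
    have hi : i = 0 := Subsingleton.elim i 0
    subst hi
    exact hbotlt
  · intro i
    fin_cases i
    · exact (hM0.symm ▸ multigraded_bot I : _)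
    · exact (hM1.symm ▸ multigraded_top I : _)
  · intro i
    have hi : i = 0 := Subsingleton.elim i 0
    subst hi
    refine ⟨I, ⟨⟨hI, le_rfl⟩, fun b hb _ => hb.2⟩, ?_⟩
    exact top_bot_factor_equiv

lemma isClean_step {K : Type*} [Field K] {n : ℕ}
    (I : Ideal (MvPolynomial (Fin n) K)) (a : Fin n →₀ ℕ)
    (hne : NoEmbeddedPrimes I) (hcl : IsCleaner I a)
    (ih1 : IsClean (Submodule.colon I (Ideal.span {(monomial a (1 : K))})))
    (ih2 : IsClean (I + Ideal.span {(monomial a (1 : K))})) : IsClean I := by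
  classical
  set u : MvPolynomial (Fin n) K := monomial a (1 : K) with hu
  set c : Ideal (MvPolynomial (Fin n) K) := Submodule.colon I (Ideal.span {u}) with hcdef
  set J : Ideal (MvPolynomial (Fin n) K) := I + Ideal.span {u} with hJdef
  have hIJ : I ≤ J := by rw [hJdef, Submodule.add_eq_sup]; exact le_sup_left
  obtain ⟨r₁, M₁, hM₁0, hM₁top, hM₁mono, hM₁gr, hM₁fac⟩ := ih1
  obtain ⟨r₂, M₂, hM₂0, hM₂top, hM₂mono, hM₂gr, hM₂fac⟩ := ih2
  obtain ⟨φ, hφinj, hφrange, hφapp⟩ := exists_mul_map I u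
  obtain ⟨π, hπsurj, hπker, hπapp⟩ := exists_proj_map I J hIJ
  have hkerπ : LinearMap.ker π = LinearMap.range φ := by
    rw [hπker, hφrange, hJdef, Submodule.add_eq_sup, Submodule.map_sup]
    have hmapI : Submodule.map I.mkQ (I : Submodule (MvPolynomial (Fin n) K)
        (MvPolynomial (Fin n) K)) = ⊥ := by
      refine le_bot_iff.mp ?_
      rintro y ⟨x, hx, rfl⟩
      rw [Submodule.mem_bot, Submodule.mkQ_apply, Submodule.Quotient.mk_eq_zero]
      exact hx
    rw [hmapI, bot_sup_eq]
  set r := r₁ + r₂ with hr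
  set M : Fin (r + 1) → Submodule (MvPolynomial (Fin n) K) (MvPolynomial (Fin n) K ⧸ I) :=
    fun i => if h : (i : ℕ) ≤ r₁ then Submodule.map φ (M₁ ⟨i, by omega⟩)
      else Submodule.comap π (M₂ ⟨(i : ℕ) - r₁, by omega⟩) with hMdef
  have F1 : ∀ (i : Fin (r + 1)) (j : Fin (r₁ + 1)), (i : ℕ) = (j : ℕ) →
      M i = Submodule.map φ (M₁ j) := by
    intro i j hij
    have hi : (i : ℕ) ≤ r₁ := by have := j.isLt; omega
    rw [hMdef]
    dsimp only
    rw [dif_pos hi]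
    exact congrArg _ (congrArg M₁ (Fin.ext hij))
  have F2 : ∀ (i : Fin (r + 1)) (j : Fin (r₂ + 1)), r₁ ≤ (i : ℕ) → (j : ℕ) = (i : ℕ) - r₁ →
      M i = Submodule.comap π (M₂ j) := by
    intro i j hi hij
    rcases lt_or_eq_of_le hi with h | h
    · rw [hMdef]
      dsimp only
      rw [dif_neg (by omega)]
      exact congrArg _ (congrArg M₂ (Fin.ext hij.symm))
    · have hj0 : j = 0 := Fin.ext (by simp only [Fin.val_zero] <;> omega)
      have h1 : M i = Submodule.map φ (M₁ (Fin.last r₁)) :=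
        F1 i (Fin.last r₁) (by simp only [Fin.val_succ, Fin.coe_castSucc, Fin.val_last, Fin.val_zero, Fin.val_mk] <;> omega)
      rw [h1, hM₁top, Submodule.map_top, hj0, hM₂0, ← hkerπ]
      rfl
  refine ⟨r, M, ?_, ?_, ?_, ?_, ?_⟩
  · rw [F1 0 0 rfl, hM₁0, Submodule.map_bot]
  · rw [F2 (Fin.last r) (Fin.last r₂) (by simp only [Fin.val_succ, Fin.coe_castSucc, Fin.val_last, Fin.val_zero, Fin.val_mk] <;> omega) (by simp only [Fin.val_succ, Fin.coe_castSucc, Fin.val_last, Fin.val_zero, Fin.val_mk] <;> omega),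
      hM₂top, Submodule.comap_top]
  · refine Fin.strictMono_iff_lt_succ.mpr fun i => ?_
    by_cases h : (i : ℕ) < r₁
    · rw [F1 i.castSucc ⟨(i : ℕ), by omega⟩ (by simp only [Fin.val_succ, Fin.coe_castSucc, Fin.val_last, Fin.val_zero, Fin.val_mk] <;> omega),
        F1 i.succ ⟨(i : ℕ) + 1, by omega⟩ (by simp only [Fin.val_succ, Fin.coe_castSucc, Fin.val_last, Fin.val_zero, Fin.val_mk] <;> omega)]
      have hlt : M₁ ⟨(i : ℕ), by omega⟩ < M₁ ⟨(i : ℕ) + 1, by omega⟩ :=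
        hM₁mono (Fin.mk_lt_mk.mpr (by omega))
      exact lt_of_le_of_ne (Submodule.map_mono hlt.le)
        fun e => hlt.ne (Submodule.map_injective_of_injective hφinj e)
    · push_neg at h
      rw [F2 i.castSucc ⟨(i : ℕ) - r₁, by have := i.isLt; omega⟩
          (by simp only [Fin.val_succ, Fin.coe_castSucc, Fin.val_last, Fin.val_zero, Fin.val_mk] <;> omega) (by simp only [Fin.val_succ, Fin.coe_castSucc, Fin.val_last, Fin.val_zero, Fin.val_mk] <;> omega),
        F2 i.succ ⟨(i : ℕ) + 1 - r₁, by have := i.isLt; omega⟩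
          (by simp only [Fin.val_succ, Fin.coe_castSucc, Fin.val_last, Fin.val_zero, Fin.val_mk] <;> omega) (by simp only [Fin.val_succ, Fin.coe_castSucc, Fin.val_last, Fin.val_zero, Fin.val_mk] <;> omega)]
      have hlt : M₂ ⟨(i : ℕ) - r₁, by have := i.isLt; omega⟩ <
          M₂ ⟨(i : ℕ) + 1 - r₁, by have := i.isLt; omega⟩ :=
        hM₂mono (Fin.mk_lt_mk.mpr (by omega))
      exact lt_of_le_of_ne (Submodule.comap_mono hlt.le)
        fun e => hlt.ne (Submodule.comap_injective_of_surjective hπsurj e)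
  · intro i
    by_cases h : (i : ℕ) ≤ r₁
    · rw [F1 i ⟨(i : ℕ), by omega⟩ rfl]
      obtain ⟨A, hA⟩ := hM₁gr ⟨(i : ℕ), by omega⟩
      refine ⟨(fun b => a + b) '' A, ?_⟩
      rw [hA, Submodule.map_span, ← Set.image_comp, ← Set.image_comp]
      refine congrArg _ (Set.image_congr fun b _ => ?_)
      show φ (Ideal.Quotient.mk c (monomial b (1 : K))) = Ideal.Quotient.mk I (monomial (a + b) (1 : K))
      rw [← Ideal.Quotient.mk_eq_mk, ← Ideal.Quotient.mk_eq_mk, hφapp, hu, monomial_mul, one_mul]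
    · push_neg at h
      rw [F2 i ⟨(i : ℕ) - r₁, by have := i.isLt; omega⟩ h.le rfl]
      obtain ⟨A, hA⟩ := hM₂gr ⟨(i : ℕ) - r₁, by have := i.isLt; omega⟩
      refine ⟨insert a A, ?_⟩
      rw [hA]
      have h1 : Submodule.map π (Submodule.span (MvPolynomial (Fin n) K)
          ((fun b : Fin n →₀ ℕ => Ideal.Quotient.mk I (monomial b (1 : K))) '' A)) =
          Submodule.span (MvPolynomial (Fin n) K)
          ((fun b : Fin n →₀ ℕ => Ideal.Quotient.mk J (monomial b (1 : K))) '' A) := by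
        rw [Submodule.map_span, ← Set.image_comp]
        refine congrArg _ (Set.image_congr fun b _ => ?_)
        show π (Ideal.Quotient.mk I (monomial b (1 : K))) = Ideal.Quotient.mk J (monomial b (1 : K))
        rw [← Ideal.Quotient.mk_eq_mk, ← Ideal.Quotient.mk_eq_mk, hπapp]
      have h2 : LinearMap.ker π = Submodule.span (MvPolynomial (Fin n) K)
          {Ideal.Quotient.mk I u} := by
        rw [hkerπ, hφrange]
        have : (Ideal.span {u} : Submodule (MvPolynomial (Fin n) K) (MvPolynomial (Fin n) K)) =
            Submodule.span (MvPolynomial (Fin n) K) {u} := rfl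
        rw [this, Submodule.map_span, Set.image_singleton]
        rfl
      rw [← h1, Submodule.comap_map_eq, Set.image_insert_eq, Submodule.span_insert, h2, sup_comm]
  · intro i
    by_cases h : (i : ℕ) < r₁
    · obtain ⟨P, hPmin, ⟨e⟩⟩ := hM₁fac ⟨(i : ℕ), h⟩
      refine ⟨P, hne P (associatedPrimes.subset_of_injective hφinj
        (minimalPrimes_subset_associatedPrimes hPmin)), ?_⟩
      obtain ⟨g⟩ := factor_congr
        (F1 i.succ (Fin.succ ⟨(i : ℕ), h⟩) (by simp only [Fin.val_succ, Fin.val_mk]))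
        (F1 i.castSucc (Fin.castSucc ⟨(i : ℕ), h⟩) (by simp only [Fin.coe_castSucc, Fin.val_mk]))
      have hp : ∀ x ∈ M₁ (Fin.succ ⟨(i : ℕ), h⟩),
          (φ x ∈ Submodule.map φ (M₁ (Fin.castSucc ⟨(i : ℕ), h⟩)) ↔
            x ∈ M₁ (Fin.castSucc ⟨(i : ℕ), h⟩)) := by
        intro x _
        constructor
        · rintro ⟨y, hy, hxy⟩
          rwa [← hφinj hxy]
        · exact fun hx' => Submodule.mem_map_of_mem hx'
      obtain ⟨e'⟩ := quot_factor_equiv φ rfl hp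
      exact ⟨g.trans (e'.symm.trans e)⟩
    · push_neg at h
      obtain ⟨P, hPmin, ⟨e⟩⟩ := hM₂fac ⟨(i : ℕ) - r₁, by have := i.isLt; omega⟩
      refine ⟨P, hcl.2.2 hPmin, ?_⟩
      obtain ⟨g⟩ := factor_congr
        (F2 i.succ (Fin.succ ⟨(i : ℕ) - r₁, by have := i.isLt; omega⟩)
          (by simp only [Fin.val_succ] <;> omega)
          (by simp only [Fin.val_succ, Fin.val_mk] <;> omega))
        (F2 i.castSucc (Fin.castSucc ⟨(i : ℕ) - r₁, by have := i.isLt; omega⟩)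
          (by simp only [Fin.coe_castSucc] <;> omega)
          (by simp only [Fin.coe_castSucc, Fin.val_mk] <;> omega))
      have hq : Submodule.map π (Submodule.comap π
          (M₂ (Fin.succ ⟨(i : ℕ) - r₁, by have := i.isLt; omega⟩))) =
          M₂ (Fin.succ ⟨(i : ℕ) - r₁, by have := i.isLt; omega⟩) :=
        Submodule.map_comap_eq_of_surjective hπsurj _
      have hp : ∀ x ∈ Submodule.comap π (M₂ (Fin.succ ⟨(i : ℕ) - r₁, by have := i.isLt; omega⟩)),
          (π x ∈ M₂ (Fin.castSucc ⟨(i : ℕ) - r₁, by have := i.isLt; omega⟩) ↔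
            x ∈ Submodule.comap π (M₂ (Fin.castSucc ⟨(i : ℕ) - r₁, by have := i.isLt; omega⟩))) :=
        fun x _ => Iff.rfl
      obtain ⟨e'⟩ := quot_factor_equiv π hq hp
      exact ⟨g.trans (e'.trans e)⟩

theorem kClean_isClean' {K : Type*} [Field K] {n : ℕ}
    (I : Ideal (MvPolynomial (Fin n) K))
    (k : ℕ) (hk : KClean K (Fin n) k I) : IsClean I := by
  induction hk with
  | prime I hI => exact isClean_of_prime hI
  | step I a hne hcl hsupp hcolon hsum ih1 ih2 => exact isClean_step I a hne hcl ih1 ih2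

end Main

/-- Every `k`-clean monomial ideal is clean: if `I ⊆ S = K[x₁,…,xₙ]`
is a monomial ideal which is `k`-clean for some `k ≥ 0`, then `S/I` admits a clean
multigraded prime filtration. -/
theorem kClean_isClean {K : Type*} [Field K] {n : ℕ}
    (I : Ideal (MvPolynomial (Fin n) K)) (hmon : IsMonomialIdeal I)
    (k : ℕ) (hk : KClean K (Fin n) k I) : IsClean I := by
  exact kClean_isClean' I k hk
end

section
/- The radical of every k-clean monomial ideal is k-clean. That is, if I ⊆ S is a k-clean monomial ideal, then √I is k-clean. -/
open MvPolynomial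

namespace KCR

variable {K : Type*} [Field K] {n : ℕ}

/-- squarefree part of an exponent vector -/
noncomputable def sqf {n : ℕ} (a : Fin n →₀ ℕ) : Fin n →₀ ℕ := a.mapRange (min · 1) (by simp)

@[simp] lemma sqf_apply (a : Fin n →₀ ℕ) (i : Fin n) : sqf a i = min (a i) 1 :=
  Finsupp.mapRange_apply

noncomputable def Mspan (K : Type*) [Field K] {n : ℕ} (G : Set (Fin n →₀ ℕ)) :
    Ideal (MvPolynomial (Fin n) K) :=
  Ideal.span ((fun a : Fin n →₀ ℕ => monomial a (1 : K)) '' G)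

lemma mem_Mspan {G : Set (Fin n →₀ ℕ)} {p : MvPolynomial (Fin n) K} :
    p ∈ Mspan K G ↔ ∀ m ∈ p.support, ∃ g ∈ G, g ≤ m :=
  MvPolynomial.mem_ideal_span_monomial_image

lemma mono_mem_Mspan {G : Set (Fin n →₀ ℕ)} {u : Fin n →₀ ℕ} :
    monomial u (1 : K) ∈ Mspan K G ↔ ∃ g ∈ G, g ≤ u := by
  classical
  rw [mem_Mspan, MvPolynomial.support_monomial]
  simp

lemma Mspan_add (G₁ G₂ : Set (Fin n →₀ ℕ)) :
    Mspan K G₁ + Mspan K G₂ = Mspan K (G₁ ∪ G₂) := by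
  unfold Mspan
  rw [Set.image_union, Ideal.span_union, Submodule.add_eq_sup]

lemma Mspan_singleton (a : Fin n →₀ ℕ) :
    Mspan K {a} = Ideal.span {monomial a (1 : K)} := by
  unfold Mspan; rw [Set.image_singleton]

lemma Mspan_eq_top_iff {G : Set (Fin n →₀ ℕ)} : Mspan K G = ⊤ ↔ 0 ∈ G := by
  constructor
  · intro h
    have : monomial (0 : Fin n →₀ ℕ) (1 : K) ∈ Mspan K G := h ▸ Submodule.mem_top
    rcases mono_mem_Mspan.1 this with ⟨g, hg, hle⟩
    have : g = 0 := le_antisymm hle zero_le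
    exact this ▸ hg
  · intro h
    rw [Ideal.eq_top_iff_one]
    have : monomial (0 : Fin n →₀ ℕ) (1 : K) ∈ Mspan K G :=
      mono_mem_Mspan.2 ⟨0, h, le_refl 0⟩
    simpa using this

lemma Mspan_colon (G : Set (Fin n →₀ ℕ)) (v : Fin n →₀ ℕ) :
    Submodule.colon (Mspan K G) (Ideal.span {monomial v (1 : K)}) =
      Mspan K ((fun g => g - v) '' G) := by
  apply le_antisymm
  · intro f hf
    rw [Ideal.mem_colon_span_singleton] at hf
    rw [mem_Mspan]
    intro m hm
    have hms : m + v ∈ (f * monomial v (1 : K)).support := by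
      rw [MvPolynomial.mem_support_iff, MvPolynomial.coeff_mul_monomial, mul_one]
      exact MvPolynomial.mem_support_iff.1 hm
    rcases mem_Mspan.1 hf _ hms with ⟨g, hg, hle⟩
    exact ⟨g - v, Set.mem_image_of_mem _ hg, tsub_le_iff_right.2 hle⟩
  · rw [Mspan, Ideal.span_le]
    rintro _ ⟨_, ⟨g, hg, rfl⟩, rfl⟩
    rw [SetLike.mem_coe, Ideal.mem_colon_span_singleton, MvPolynomial.monomial_mul, mul_one]
    exact mono_mem_Mspan.2 ⟨g, hg, le_trans (le_tsub_add) (le_refl _)⟩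

noncomputable def PP (K : Type*) [Field K] {n : ℕ} (c : Finset (Fin n)) :
    Ideal (MvPolynomial (Fin n) K) :=
  Mspan K ((fun i => Finsupp.single i 1) '' ↑c)

lemma mono_mem_PP {c : Finset (Fin n)} {u : Fin n →₀ ℕ} :
    monomial u (1 : K) ∈ PP K c ↔ ∃ i ∈ c, u i ≠ 0 := by
  rw [PP, mono_mem_Mspan]
  constructor
  · rintro ⟨g, ⟨i, hi, rfl⟩, hle⟩
    exact ⟨i, hi, by have := Finsupp.single_le_iff.1 hle; omega⟩
  · rintro ⟨i, hi, hu⟩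
    exact ⟨Finsupp.single i 1, ⟨i, hi, rfl⟩, Finsupp.single_le_iff.2 (by omega)⟩

lemma mem_PP {c : Finset (Fin n)} {p : MvPolynomial (Fin n) K} :
    p ∈ PP K c ↔ ∀ m ∈ p.support, ∃ i ∈ c, m i ≠ 0 := by
  rw [PP, mem_Mspan]
  refine forall₂_congr fun m _ => ⟨?_, ?_⟩
  · rintro ⟨g, ⟨i, hi, rfl⟩, hle⟩
    exact ⟨i, hi, by have := Finsupp.single_le_iff.1 hle; omega⟩
  · rintro ⟨i, hi, hu⟩
    exact ⟨Finsupp.single i 1, ⟨i, hi, rfl⟩, Finsupp.single_le_iff.2 (by omega)⟩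

lemma PP_eq_ker (c : Finset (Fin n)) :
    PP K c = RingHom.ker ((aeval (R := K)
      (fun i : Fin n => if i ∈ c then (0 : MvPolynomial (Fin n) K) else X i)).toRingHom) := by
  classical
  set φ := (aeval (R := K) (fun i : Fin n => if i ∈ c then (0 : MvPolynomial (Fin n) K) else X i))
  have hmono : ∀ (m : Fin n →₀ ℕ) (r : K), φ (monomial m r) =
      if ∀ i ∈ c, m i = 0 then monomial m r else 0 := by
    intro m r
    rw [aeval_monomial]
    by_cases h : ∀ i ∈ c, m i = 0
    · rw [if_pos h]
      have he : (m.prod fun j k => (if j ∈ c then (0 : MvPolynomial (Fin n) K) else X j) ^ k)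
          = m.prod fun j k => (X j) ^ k := by
        apply Finsupp.prod_congr
        intro j hj
        have hjc : j ∉ c := fun hc => (Finsupp.mem_support_iff.1 hj) (h j hc)
        rw [if_neg hjc]
      rw [he, MvPolynomial.monomial_eq, MvPolynomial.algebraMap_eq]
    · push_neg at h
      obtain ⟨i, hic, hmi⟩ := h
      rw [if_neg (by push_neg; exact ⟨i, hic, hmi⟩)]
      have he : (m.prod fun j k => (if j ∈ c then (0 : MvPolynomial (Fin n) K) else X j) ^ k)
          = 0 := by
        rw [Finsupp.prod]
        apply Finset.prod_eq_zero (Finsupp.mem_support_iff.2 hmi)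
        rw [if_pos hic, zero_pow hmi]
      rw [he, mul_zero]
  apply le_antisymm
  · rw [PP, Mspan, Ideal.span_le]
    rintro _ ⟨_, ⟨i, hi, rfl⟩, rfl⟩
    simp only [SetLike.mem_coe, RingHom.mem_ker, AlgHom.toRingHom_eq_coe, RingHom.coe_coe]
    rw [hmono]
    rw [if_neg]
    push_neg
    exact ⟨i, hi, by simp⟩
  · intro f hf
    simp only [RingHom.mem_ker, AlgHom.toRingHom_eq_coe, RingHom.coe_coe] at hf
    rw [mem_PP]
    intro m hm
    by_contra hcon
    push_neg at hcon
    have : MvPolynomial.coeff m (φ f) = MvPolynomial.coeff m f := by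
      conv_lhs => rw [f.as_sum, map_sum]
      rw [MvPolynomial.coeff_sum]
      rw [Finset.sum_eq_single m]
      · rw [hmono, if_pos hcon, MvPolynomial.coeff_monomial, if_pos rfl]
      · intro m' _ hne
        rw [hmono]
        split
        · rw [MvPolynomial.coeff_monomial, if_neg hne]
        · simp
      · intro h; exact absurd hm h
    rw [hf] at this
    simp only [MvPolynomial.coeff_zero] at this
    exact (MvPolynomial.mem_support_iff.1 hm) this.symm

lemma PP_isPrime (c : Finset (Fin n)) : (PP K c).IsPrime := by
  rw [PP_eq_ker]; exact RingHom.ker_isPrime _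

lemma exists_PP_between {G : Set (Fin n →₀ ℕ)} {P : Ideal (MvPolynomial (Fin n) K)}
    (hP : P.IsPrime) (hle : Mspan K G ≤ P) :
    ∃ c : Finset (Fin n), Mspan K G ≤ PP K c ∧ PP K c ≤ P := by
  classical
  refine ⟨Finset.univ.filter (fun i => X i ∈ P), ?_, ?_⟩
  · rw [Mspan, Ideal.span_le]
    rintro _ ⟨g, hg, rfl⟩
    have hgP : monomial g (1 : K) ∈ P := hle (Ideal.subset_span ⟨g, hg, rfl⟩)
    rw [MvPolynomial.monomial_eq, map_one, one_mul, Finsupp.prod] at hgP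
    haveI := hP
    rcases (Ideal.IsPrime.prod_mem_iff).1 hgP with ⟨i, hi, hXP⟩
    have hgi : g i ≠ 0 := Finsupp.mem_support_iff.1 hi
    have hX : X i ∈ P := (hP.pow_mem_iff_mem (g i) (Nat.pos_of_ne_zero hgi)).1 hXP
    exact SetLike.mem_coe.2 (mono_mem_PP.2 ⟨i, by simp [hX], hgi⟩)
  · rw [PP, Mspan, Ideal.span_le]
    rintro _ ⟨_, ⟨i, hi, rfl⟩, rfl⟩
    have : monomial (Finsupp.single i 1) (1 : K) = X i := by
      rw [MvPolynomial.monomial_eq, map_one, one_mul]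
      rw [Finsupp.prod_single_index (by simp), pow_one]
    show monomial (Finsupp.single i 1) (1 : K) ∈ (P : Set _)
    rw [this]
    simp only [Finset.coe_filter, Finset.mem_univ, true_and, Set.mem_setOf_eq] at hi
    exact hi

lemma minimalPrimes_eq_PP {G : Set (Fin n →₀ ℕ)} {P : Ideal (MvPolynomial (Fin n) K)}
    (hP : P ∈ (Mspan K G).minimalPrimes) : ∃ c, P = PP K c := by
  obtain ⟨c, h1, h2⟩ := exists_PP_between hP.1.1 hP.1.2
  exact ⟨c, le_antisymm (hP.2 ⟨PP_isPrime c, h1⟩ h2) h2⟩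

lemma minimalPrimes_finite (G : Set (Fin n →₀ ℕ)) :
    (Mspan K G).minimalPrimes.Finite := by
  apply Set.Finite.subset (Set.finite_range (PP K (n := n)))
  intro P hP
  obtain ⟨c, rfl⟩ := minimalPrimes_eq_PP hP
  exact Set.mem_range_self c

lemma Mspan_radical (G : Set (Fin n →₀ ℕ)) :
    (Mspan K G).radical = Mspan K (sqf '' G) := by
  classical
  apply le_antisymm
  · intro f hf
    rw [Ideal.radical_eq_sInf] at hf
    rw [mem_Mspan]
    intro m hm
    by_contra hcon
    push_neg at hcon
    set c : Finset (Fin n) := Finset.univ \ m.support with hc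
    have hle : Mspan K G ≤ PP K c := by
      rw [Mspan, Ideal.span_le]
      rintro _ ⟨g, hg, rfl⟩
      show monomial g (1 : K) ∈ (PP K c : Set _)
      rw [SetLike.mem_coe, mono_mem_PP]
      by_contra hno
      push_neg at hno
      refine hcon (sqf g) (Set.mem_image_of_mem _ hg) ?_
      intro i
      rcases Nat.eq_zero_or_pos (g i) with h0 | h0
      · simp [h0]
      · by_cases hmem : i ∈ m.support
        · have : 1 ≤ m i := Nat.pos_of_ne_zero (Finsupp.mem_support_iff.1 hmem)
          simp only [sqf_apply]
          omega
        · have hic : i ∈ c := by simp [hc, hmem]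
          have := hno i hic
          omega
    have hfP : f ∈ PP K c := Submodule.mem_sInf.1 hf _ ⟨hle, PP_isPrime c⟩
    rcases mem_PP.1 hfP m hm with ⟨i, hic, hmi⟩
    rw [hc] at hic
    simp only [Finset.mem_sdiff, Finset.mem_univ, true_and, Finsupp.mem_support_iff] at hic
    exact hmi (by omega)
  · rw [Mspan, Ideal.span_le]
    rintro _ ⟨_, ⟨g, hg, rfl⟩, rfl⟩
    show monomial (sqf g) (1 : K) ∈ ((Mspan K G).radical : Set _)
    rw [SetLike.mem_coe, Ideal.mem_radical_iff]
    refine ⟨(g.support.sup g) + 1, ?_⟩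
    rw [MvPolynomial.monomial_pow, one_pow]
    rw [mono_mem_Mspan]
    refine ⟨g, hg, ?_⟩
    intro i
    rw [Finsupp.smul_apply]
    rcases Nat.eq_zero_or_pos (g i) with h0 | h0
    · simp [h0]
    · have hi : i ∈ g.support := Finsupp.mem_support_iff.2 (by omega)
      have := Finset.le_sup (f := ⇑g) hi
      simp only [sqf_apply, smul_eq_mul]
      have hmin : min (g i) 1 = 1 := by omega
      rw [hmin]
      omega

lemma colon_singleton_eq_top {R : Type*} [CommRing R] {J : Ideal R} {u : R} :
    Submodule.colon J (Ideal.span {u}) = ⊤ ↔ u ∈ J := by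
  constructor
  · intro h
    have : (1 : R) ∈ Submodule.colon J (Ideal.span {u}) := h ▸ Submodule.mem_top
    simpa using Ideal.mem_colon_span_singleton.1 this
  · intro h
    rw [eq_top_iff]
    intro z _
    rw [Ideal.mem_colon_span_singleton]
    exact Ideal.mul_mem_left _ _ h

lemma colon_singleton_one {R : Type*} [CommRing R] (J : Ideal R) :
    Submodule.colon J (Ideal.span {(1 : R)}) = J := by
  ext z
  rw [Ideal.mem_colon_span_singleton, mul_one]

lemma sInf_le_prime {R : Type*} [CommRing R] {F : Set (Ideal R)} (hfin : F.Finite)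
    {P : Ideal R} (hP : P.IsPrime) (hle : sInf F ≤ P) : ∃ Q ∈ F, Q ≤ P := by
  classical
  rw [← hfin.coe_toFinset, ← Finset.inf_id_eq_sInf] at hle
  rcases hP.inf_le'.1 hle with ⟨Q, hQ, hQP⟩
  exact ⟨Q, hfin.mem_toFinset.1 hQ, hQP⟩

lemma colon_sInf {R : Type*} [CommRing R] {F : Set (Ideal R)}
    (hprime : ∀ Q ∈ F, Q.IsPrime) (u : R) :
    Submodule.colon (sInf F) (Ideal.span {u}) = sInf {Q | Q ∈ F ∧ u ∉ Q} := by
  ext z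
  simp only [Ideal.mem_colon_span_singleton, Submodule.mem_sInf, Set.mem_setOf_eq]
  constructor
  · rintro h Q ⟨hQF, hu⟩
    rcases ((hprime Q hQF).mem_or_mem (h Q hQF)) with hz | hz
    · exact hz
    · exact absurd hz hu
  · intro h Q hQF
    by_cases hu : u ∈ Q
    · exact Ideal.mul_mem_left _ _ hu
    · exact Ideal.mul_mem_right _ _ (h Q ⟨hQF, hu⟩)

lemma minimalPrimes_sInf {R : Type*} [CommRing R] {I0 : Ideal R} {F : Set (Ideal R)}
    (hfin : F.Finite) (hsub : F ⊆ I0.minimalPrimes) :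
    (sInf F).minimalPrimes = F := by
  have antichain : ∀ Q ∈ F, ∀ Q' ∈ F, Q ≤ Q' → Q' ≤ Q := by
    intro Q hQ Q' hQ' hle
    exact (hsub hQ').2 ⟨(hsub hQ).1.1, (hsub hQ).1.2⟩ hle
  ext P
  constructor
  · intro hP
    rcases sInf_le_prime hfin hP.1.1 hP.1.2 with ⟨Q, hQF, hQP⟩
    have hPQ : P ≤ Q := hP.2 ⟨(hsub hQF).1.1, sInf_le hQF⟩ hQP
    rwa [le_antisymm hPQ hQP]
  · intro hQ
    refine ⟨⟨(hsub hQ).1.1, sInf_le hQ⟩, ?_⟩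
    intro y hy hyP
    rcases sInf_le_prime hfin hy.1 hy.2 with ⟨Q'', hQ''F, hQ''y⟩
    exact le_trans (antichain Q'' hQ''F P hQ (le_trans hQ''y hyP)) hQ''y

lemma noEmbeddedPrimes_sInf {σ : Type*} {I0 : Ideal (MvPolynomial σ K)}
    {F : Set (Ideal (MvPolynomial σ K))}
    (hfin : F.Finite) (hsub : F ⊆ I0.minimalPrimes) :
    NoEmbeddedPrimes (sInf F) := by
  intro P hP
  obtain ⟨hprime, y0, hann⟩ := hP
  obtain ⟨y, rfl⟩ := Ideal.Quotient.mk_surjective y0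
  have hmem : ∀ z : MvPolynomial σ K, z ∈ P ↔ z * y ∈ sInf F := by
    intro z
    have key : ∀ w : MvPolynomial σ K,
        (w • Ideal.Quotient.mk (sInf F) y = 0 ↔ w * y ∈ sInf F) := by
      intro w
      rw [← Ideal.Quotient.mk_eq_mk, ← Submodule.Quotient.mk_smul, smul_eq_mul,
        Submodule.Quotient.mk_eq_zero]
    rw [hann, Ideal.mem_radical_iff]
    simp only [Submodule.mem_colon_singleton, Submodule.mem_bot, key]
    constructor
    · rintro ⟨m, hm⟩
      rw [Submodule.mem_sInf]
      intro Q hQ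
      rcases (hsub hQ).1.1.mem_or_mem (Submodule.mem_sInf.1 hm Q hQ) with h | h
      · exact Ideal.mul_mem_right _ _ ((hsub hQ).1.1.mem_of_pow_mem _ h)
      · exact Ideal.mul_mem_left _ _ h
    · intro h
      exact ⟨1, by rwa [pow_one]⟩
  have hPT : P = sInf {Q | Q ∈ F ∧ y ∉ Q} := by
    ext z
    rw [hmem]
    simp only [Submodule.mem_sInf, Set.mem_setOf_eq]
    constructor
    · rintro h Q ⟨hQF, hyQ⟩
      rcases ((hsub hQF).1.1.mem_or_mem (h Q hQF)) with hz | hz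
      · exact hz
      · exact absurd hz hyQ
    · intro h Q hQF
      by_cases hy : y ∈ Q
      · exact Ideal.mul_mem_left _ _ hy
      · exact Ideal.mul_mem_right _ _ (h Q ⟨hQF, hy⟩)
  have hsub' : {Q | Q ∈ F ∧ y ∉ Q} ⊆ I0.minimalPrimes := fun Q hQ => hsub hQ.1
  have hfin' : {Q | Q ∈ F ∧ y ∉ Q}.Finite := hfin.subset (fun Q hQ => hQ.1)
  rcases sInf_le_prime hfin' hprime (le_of_eq hPT.symm) with ⟨Q0, hQ0, hQ0P⟩
  have : P = Q0 := le_antisymm (hPT ▸ sInf_le hQ0) hQ0P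
  rw [minimalPrimes_sInf hfin hsub]
  rw [this]
  exact hQ0.1

/-- the key componentwise identity -/
lemma key1 (a v g : Fin n →₀ ℕ) :
    sqf (g - a) - (v + a) = sqf g - v - (sqf a - v) := by
  ext i
  simp only [Finsupp.tsub_apply, Finsupp.coe_add, Pi.add_apply, sqf_apply]
  omega

lemma master {k : ℕ} {I : Ideal (MvPolynomial (Fin n) K)} (hk : KClean K (Fin n) k I) :
    IsMonomialIdeal I → ∀ v : Fin n →₀ ℕ, monomial v (1 : K) ∉ I.radical →
      KClean K (Fin n) k (Submodule.colon I.radical (Ideal.span {monomial v (1 : K)})) := by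
  induction hk with
  | prime I hI =>
    intro _ v hv
    rw [hI.radical] at hv ⊢
    have : Submodule.colon I (Ideal.span {monomial v (1 : K)}) = I := by
      ext z
      rw [Ideal.mem_colon_span_singleton]
      constructor
      · intro h
        rcases hI.mem_or_mem h with h | h
        · exact h
        · exact absurd h hv
      · intro h
        exact Ideal.mul_mem_right _ _ h
    rw [this]
    exact KClean.prime I hI
  | step I a hne hcl hsupp hcolon hsum ih1 ih2 =>
    intro hmon v hv
    obtain ⟨G, hG⟩ := hmon
    have hIM : I = Mspan K G := hG
    clear hG
    set b : Fin n →₀ ℕ := sqf a with hb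
    set c : Fin n →₀ ℕ := b - v with hcdef
    -- basic rewrites
    have hrad : I.radical = Mspan K (sqf '' G) := by rw [hIM, Mspan_radical]
    set X : Ideal (MvPolynomial (Fin n) K) :=
      Submodule.colon I.radical (Ideal.span {monomial v (1 : K)}) with hXdef
    have hX : X = Mspan K ((fun g => g - v) '' (sqf '' G)) := by
      rw [hXdef, hrad, Mspan_colon]
    have hX' : X = Mspan K ((fun g => sqf g - v) '' G) := by
      rw [hX, Set.image_image]
    have hXtop : X ≠ ⊤ := by
      intro h
      rw [hXdef, colon_singleton_eq_top] at h
      exact hv h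
    -- monomial ideal facts for the colon and sum ideals
    have hmon1 : IsMonomialIdeal (Submodule.colon I (Ideal.span {monomial a (1 : K)})) :=
      ⟨(fun g => g - a) '' G, by rw [hIM, Mspan_colon]; rfl⟩
    have hmon2 : IsMonomialIdeal (I + Ideal.span {monomial a (1 : K)}) :=
      ⟨G ∪ {a}, by rw [hIM, ← Mspan_singleton, Mspan_add]; rfl⟩
    -- E1 : colon of X by c equals the colon ideal of (I : a) radical
    have E1 : Submodule.colon X (Ideal.span {monomial c (1 : K)}) =
        Submodule.colon (Submodule.colon I (Ideal.span {monomial a (1 : K)})).radical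
          (Ideal.span {monomial (v + a) (1 : K)}) := by
      rw [hX', Mspan_colon]
      rw [hIM, Mspan_colon, Mspan_radical, Mspan_colon]
      rw [Set.image_image, Set.image_image, Set.image_image]
      congr 1
      apply Set.image_congr'
      intro g
      rw [key1 a v g]
    -- E2 : X + (c) equals the colon of (I + (a)).radical by v
    have E2 : X + Ideal.span {monomial c (1 : K)} =
        Submodule.colon (I + Ideal.span {monomial a (1 : K)}).radical
          (Ideal.span {monomial v (1 : K)}) := by
      have h2 : I + Ideal.span {monomial a (1 : K)} = Mspan K (G ∪ {a}) := by
        rw [hIM, ← Mspan_singleton, Mspan_add]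
      rw [h2, Mspan_radical, Mspan_colon, Set.image_union, Set.image_singleton,
        Set.image_union, Set.image_singleton, ← Mspan_add, ← hX, Mspan_singleton]
    by_cases hcX : monomial c (1 : K) ∈ X
    · -- `mono c` already lies in `X`; reduce to the IH for `I + (a)`
      have hXX : X + Ideal.span {monomial c (1 : K)} = X := by
        rw [Submodule.add_eq_sup, sup_eq_left, Ideal.span_le]
        intro z hz
        rw [Set.mem_singleton_iff] at hz
        rw [hz]; exact hcX
      have hXeq : X = Submodule.colon (I + Ideal.span {monomial a (1 : K)}).radical
          (Ideal.span {monomial v (1 : K)}) := by rw [← hXX, E2]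
      rw [hXeq]
      apply ih2 hmon2
      intro hvmem
      exact hXtop (by rw [hXeq, colon_singleton_eq_top.2 hvmem])
    · by_cases hc0 : c = 0
      · -- reduce to the IH for `I : (a)`
        have hXeq : X =
            Submodule.colon (Submodule.colon I (Ideal.span {monomial a (1 : K)})).radical
              (Ideal.span {monomial (v + a) (1 : K)}) := by
          rw [← E1, hc0]
          rw [show monomial (0 : Fin n →₀ ℕ) (1 : K) = 1 by simp]
          rw [colon_singleton_one]
        rw [hXeq]
        apply ih1 hmon1
        intro hmem
        exact hXtop (by rw [hXeq, colon_singleton_eq_top.2 hmem])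
      · -- genuine cleaning step for `X` with cleaner `c`
        have hsumtop : X + Ideal.span {monomial c (1 : K)} ≠ ⊤ := by
          intro h
          rw [hX', ← Mspan_singleton, Mspan_add, Mspan_eq_top_iff] at h
          rcases h with h | h
          · rcases h with ⟨g, hg, hg0⟩
            refine hv ?_
            rw [hrad, mono_mem_Mspan]
            exact ⟨sqf g, Set.mem_image_of_mem _ hg, tsub_eq_zero_iff_le.1 hg0⟩
          · rw [Set.mem_singleton_iff] at h
            exact hc0 h.symm
        have hminfinI : I.minimalPrimes.Finite := by
          rw [hIM]; exact minimalPrimes_finite G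
        have hfamXsub : {P | P ∈ I.minimalPrimes ∧ monomial v (1 : K) ∉ P} ⊆ I.minimalPrimes :=
          fun P hP => hP.1
        have hfamXfin : {P | P ∈ I.minimalPrimes ∧ monomial v (1 : K) ∉ P}.Finite :=
          hminfinI.subset hfamXsub
        have hXsInf : X = sInf {P | P ∈ I.minimalPrimes ∧ monomial v (1 : K) ∉ P} := by
          rw [hXdef, ← Ideal.sInf_minimalPrimes, colon_sInf (fun Q hQ => hQ.1.1)]
        have hminfinJ : (I + Ideal.span {monomial a (1 : K)}).minimalPrimes.Finite := by
          rw [hIM, ← Mspan_singleton, Mspan_add]; exact minimalPrimes_finite _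
        have hfamAsub : {P | P ∈ (I + Ideal.span {monomial a (1 : K)}).minimalPrimes ∧
              monomial v (1 : K) ∉ P} ⊆ (I + Ideal.span {monomial a (1 : K)}).minimalPrimes :=
          fun P hP => hP.1
        have hfamAfin : {P | P ∈ (I + Ideal.span {monomial a (1 : K)}).minimalPrimes ∧
              monomial v (1 : K) ∉ P}.Finite := hminfinJ.subset hfamAsub
        have hXcsInf : X + Ideal.span {monomial c (1 : K)} =
            sInf {P | P ∈ (I + Ideal.span {monomial a (1 : K)}).minimalPrimes ∧
              monomial v (1 : K) ∉ P} := by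
          rw [E2, ← Ideal.sInf_minimalPrimes, colon_sInf (fun Q hQ => hQ.1.1)]
        have hneX : NoEmbeddedPrimes X := by
          rw [hXsInf]; exact noEmbeddedPrimes_sInf hfamXfin hfamXsub
        have hclX : IsCleaner X c := by
          refine ⟨hc0, hcX, ?_⟩
          rw [hXcsInf, hXsInf,
            minimalPrimes_sInf hfamAfin hfamAsub, minimalPrimes_sInf hfamXfin hfamXsub]
          rintro P ⟨hPJ, hPv⟩
          exact ⟨hcl.2.2 hPJ, hPv⟩
        have hsuppc : c.support.card ≤ k + 1 := by
          refine le_trans (Finset.card_le_card ?_) hsupp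
          intro i hi
          rw [Finsupp.mem_support_iff] at hi ⊢
          have : c i = min (a i) 1 - v i := by
            rw [hcdef, hb, Finsupp.tsub_apply, sqf_apply]
          rw [this] at hi
          omega
        refine KClean.step X c hneX hclX hsuppc ?_ ?_
        · rw [E1]
          apply ih1 hmon1
          intro hmem
          have : Submodule.colon X (Ideal.span {monomial c (1 : K)}) = ⊤ := by
            rw [E1]; exact colon_singleton_eq_top.2 hmem
          exact hcX (colon_singleton_eq_top.1 this)
        · rw [E2]
          apply ih2 hmon2
          intro hmem
          exact hsumtop (by rw [E2]; exact colon_singleton_eq_top.2 hmem)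

end KCR

/-- The radical of every `k`-clean monomial ideal is `k`-clean. -/
theorem kClean_radical {K : Type*} [Field K] {n : ℕ}
    (I : Ideal (MvPolynomial (Fin n) K)) (hmon : IsMonomialIdeal I)
    (k : ℕ) (hk : KClean K (Fin n) k I) : KClean K (Fin n) k I.radical := by
  have hne : I ≠ ⊤ := by
    cases hk with
    | prime _ h => exact h.ne_top
    | step _ a' hne' hcl' hsupp' hcolon' hsum' =>
      intro h
      exact hcl'.2.1 (h ▸ Submodule.mem_top)
  have h0 : monomial (0 : Fin n →₀ ℕ) (1 : K) ∉ I.radical := by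
    rw [show monomial (0 : Fin n →₀ ℕ) (1 : K) = 1 by simp]
    intro h
    rcases (Ideal.mem_radical_iff.1 h) with ⟨m, hm⟩
    rw [one_pow] at hm
    exact hne ((Ideal.eq_top_iff_one _).2 hm)
  have h1 := KCR.master hk hmon 0 h0
  rwa [show monomial (0 : Fin n →₀ ℕ) (1 : K) = 1 by simp, KCR.colon_singleton_one] at h1
end

section
/- Let Δ be a (d−1)-dimensional simplicial complex on [n] and let 0 ≤ k ≤ d−1. Then Δ is k-decomposable if and only if its Stanley–Reisner ideal I_Δ is k-clean. -/
open MvPolynomial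

/-- `D` is a simplicial complex on `Fin n` (a collection of finite sets closed
under taking subsets). -/
def IsSimplicialComplex {n : ℕ} (D : Finset (Finset (Fin n))) : Prop :=
  ∀ F ∈ D, ∀ G, G ⊆ F → G ∈ D

/-- The Stanley–Reisner ideal of `D`, generated by the squarefree monomials
`x^F = ∏_{i ∈ F} x_i` over the non-faces `F` of `D`. -/
noncomputable def srIdeal (K : Type*) [Field K] {n : ℕ} (D : Finset (Finset (Fin n))) :
    Ideal (MvPolynomial (Fin n) K) :=
  Ideal.span ((fun F : Finset (Fin n) => ∏ i ∈ F, (X i : MvPolynomial (Fin n) K)) ''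
    {F : Finset (Fin n) | F ∉ D})

/-- `F` is a facet (maximal face) of the collection `E`. -/
def IsFacetOf {n : ℕ} (E : Finset (Finset (Fin n))) (F : Finset (Fin n)) : Prop :=
  F ∈ E ∧ ∀ G ∈ E, F ⊆ G → F = G

/-- The star of a face: `star_D σ = {F ∈ D : σ ∪ F ∈ D}`. -/
def starC {n : ℕ} (D : Finset (Finset (Fin n))) (s : Finset (Fin n)) :
    Finset (Finset (Fin n)) :=
  D.filter fun F => s ∪ F ∈ D

/-- The deletion of a face: `D ∖ σ = {F ∈ D : σ ⊄ F}`. -/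
def delC {n : ℕ} (D : Finset (Finset (Fin n))) (s : Finset (Fin n)) :
    Finset (Finset (Fin n)) :=
  D.filter fun F => ¬ s ⊆ F

/-- The link of a face: `link_D σ = {F ∈ D : σ ∩ F = ∅, σ ∪ F ∈ D}`. -/
def linkC {n : ℕ} (D : Finset (Finset (Fin n))) (s : Finset (Fin n)) :
    Finset (Finset (Fin n)) :=
  D.filter fun F => s ∩ F = ∅ ∧ s ∪ F ∈ D

/-- `σ` is a shedding face of `D`: `σ` is a face and no facet of `(star_D σ) ∖ σ`
is a facet of `D ∖ σ`. -/
def IsSheddingFace {n : ℕ} (D : Finset (Finset (Fin n))) (s : Finset (Fin n)) : Prop :=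
  s ∈ D ∧ ∀ F : Finset (Fin n), IsFacetOf (delC (starC D s) s) F → ¬ IsFacetOf (delC D s) F
/-- `D` is `k`-decomposable: `D` is one of the trivial complexes `{}`, or a simplex
(the powerset of a finite set), or `D` has a shedding face `σ` with `dim σ ≤ k`
(i.e. `|σ| ≤ k + 1`) such that both `link_D σ` and `D ∖ σ` are `k`-decomposable. -/
inductive KDecomposable {n : ℕ} (k : ℕ) : Finset (Finset (Fin n)) → Prop
  | empty : KDecomposable k (∅ : Finset (Finset (Fin n)))
  | simplex (F : Finset (Fin n)) : KDecomposable k F.powerset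
  | shed (D : Finset (Finset (Fin n))) (s : Finset (Fin n))
      (hshed : IsSheddingFace D s) (hcard : s.card ≤ k + 1)
      (hlink : KDecomposable k (linkC D s)) (hdel : KDecomposable k (delC D s)) :
      KDecomposable k D


open MvPolynomial

namespace KDC

open Finset

variable {K : Type*} [Field K] {n : ℕ}

/-- exponent vector of the squarefree monomial `x^F`. -/
noncomputable def expF {n : ℕ} (F : Finset (Fin n)) : Fin n →₀ ℕ := ∑ i ∈ F, Finsupp.single i 1

lemma expF_apply (F : Finset (Fin n)) (i : Fin n) :
    expF F i = if i ∈ F then 1 else 0 := by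
  classical
  rw [expF, Finsupp.finset_sum_apply]
  simp [Finsupp.single_apply]

lemma support_expF (F : Finset (Fin n)) : (expF F).support = F := by
  ext i
  simp [Finsupp.mem_support_iff, expF_apply]

lemma expF_le_iff {F : Finset (Fin n)} {a : Fin n →₀ ℕ} :
    expF F ≤ a ↔ F ⊆ a.support := by
  rw [Finsupp.le_def]
  constructor
  · intro h i hi
    have := h i
    rw [expF_apply, if_pos hi] at this
    simp [Finsupp.mem_support_iff]
    omega
  · intro h i
    rw [expF_apply]
    split
    · next hi => have := h hi; rw [Finsupp.mem_support_iff] at this; omega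
    · omega

lemma monomial_expF (F : Finset (Fin n)) :
    (monomial (expF F) (1 : K)) = ∏ i ∈ F, (X i : MvPolynomial (Fin n) K) := by
  classical
  induction F using Finset.induction with
  | empty => simp [expF]
  | insert a s hx ih =>
    rw [Finset.prod_insert hx, ← ih, expF, Finset.sum_insert hx, X, monomial_mul, one_mul]
    rfl

lemma support_add_eq' (a b : Fin n →₀ ℕ) : (a + b).support = a.support ∪ b.support := by
  ext i
  simp [Finsupp.mem_support_iff]
  omega

lemma srIdeal_eq (D : Finset (Finset (Fin n))) :
    srIdeal K D
      = Ideal.span ((fun a => monomial a (1 : K)) '' (expF '' {F | F ∉ D})) := by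
  rw [srIdeal, Set.image_image]
  congr 1
  exact Set.image_congr fun F _ => (monomial_expF F).symm

lemma mem_srIdeal_iff {D : Finset (Finset (Fin n))} {p : MvPolynomial (Fin n) K} :
    p ∈ srIdeal K D ↔ ∀ m ∈ p.support, ∃ F, F ∉ D ∧ F ⊆ m.support := by
  rw [srIdeal_eq, mem_ideal_span_monomial_image]
  refine forall₂_congr fun m _ => ?_
  constructor
  · rintro ⟨si, ⟨F, hF, rfl⟩, hle⟩
    exact ⟨F, hF, expF_le_iff.mp hle⟩
  · rintro ⟨F, hF, hsub⟩
    exact ⟨expF F, ⟨F, hF, rfl⟩, expF_le_iff.mpr hsub⟩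

lemma monomial_mem_srIdeal {D : Finset (Finset (Fin n))} {a : Fin n →₀ ℕ} :
    monomial a (1 : K) ∈ srIdeal K D ↔ ∃ F, F ∉ D ∧ F ⊆ a.support := by
  classical
  rw [mem_srIdeal_iff, support_monomial]
  simp

lemma monomial_mem_srIdeal' {D : Finset (Finset (Fin n))} (hD : IsSimplicialComplex D)
    {a : Fin n →₀ ℕ} :
    monomial a (1 : K) ∈ srIdeal K D ↔ a.support ∉ D := by
  rw [monomial_mem_srIdeal]
  constructor
  · rintro ⟨F, hF, hsub⟩ hsupp
    exact hF (hD _ hsupp _ hsub)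
  · intro h
    exact ⟨a.support, h, le_rfl⟩

lemma prodX_mem_srIdeal {D : Finset (Finset (Fin n))} (hD : IsSimplicialComplex D)
    {F : Finset (Fin n)} :
    (∏ i ∈ F, (X i : MvPolynomial (Fin n) K)) ∈ srIdeal K D ↔ F ∉ D := by
  rw [← monomial_expF, monomial_mem_srIdeal' hD, support_expF]

end KDC
namespace KDC

open Finset

variable {K : Type*} [Field K] {n : ℕ}

/-- The prime ideal generated by the variables indexed by `A`. -/
noncomputable def varIdeal (K : Type*) [Field K] {n : ℕ} (A : Finset (Fin n)) :
    Ideal (MvPolynomial (Fin n) K) :=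
  Ideal.span (X '' (A : Set (Fin n)))

lemma mem_varIdeal_iff {A : Finset (Fin n)} {p : MvPolynomial (Fin n) K} :
    p ∈ varIdeal K A ↔ ∀ m ∈ p.support, ∃ i ∈ A, m i ≠ 0 := by
  rw [varIdeal, mem_ideal_span_X_image]
  simp

lemma X_mem_varIdeal {A : Finset (Fin n)} {i : Fin n} :
    (X i : MvPolynomial (Fin n) K) ∈ varIdeal K A ↔ i ∈ A := by
  rw [mem_varIdeal_iff, support_X]
  constructor
  · intro h
    obtain ⟨j, hj, hne⟩ := h _ (Finset.mem_singleton_self _)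
    rw [Finsupp.single_apply] at hne
    by_cases hij : i = j
    · exact hij ▸ hj
    · simp [hij] at hne
  · intro h m hm
    rw [Finset.mem_singleton] at hm
    exact ⟨i, h, by simp [hm]⟩

lemma monomial_mem_varIdeal {A : Finset (Fin n)} {a : Fin n →₀ ℕ} :
    monomial a (1 : K) ∈ varIdeal K A ↔ ∃ i ∈ A, a i ≠ 0 := by
  classical
  rw [mem_varIdeal_iff, support_monomial]
  simp

lemma varIdeal_inj {A B : Finset (Fin n)} (h : varIdeal K A = varIdeal K B) : A = B := by
  ext i
  rw [← @X_mem_varIdeal K _ n A i, h, X_mem_varIdeal]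

lemma varIdeal_isPrime (A : Finset (Fin n)) : (varIdeal K A).IsPrime := by
  classical
  set f : Fin n → MvPolynomial (Fin n) K := fun i => if i ∈ A then 0 else X i with hf
  have key : ∀ p : MvPolynomial (Fin n) K, aeval f p - p ∈ varIdeal K A := by
    intro p
    rw [show p = ∑ m ∈ p.support, monomial m (coeff m p) from (support_sum_monomial_coeff p).symm,
      map_sum, ← Finset.sum_sub_distrib]
    refine Ideal.sum_mem _ fun m hm => ?_
    by_cases hmA : ∃ i ∈ A, m i ≠ 0
    · have h0 : aeval f (monomial m (coeff m p)) = 0 := by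
        rw [aeval_monomial]
        obtain ⟨i, hiA, hine⟩ := hmA
        have : (fun i k => f i ^ k) i (m i) = 0 := by
          simp [hf, hiA, pow_eq_zero_iff hine]
        rw [Finsupp.prod, Finset.prod_eq_zero (Finsupp.mem_support_iff.mpr hine) this,
          mul_zero]
      rw [h0, zero_sub]
      refine neg_mem ?_
      have : monomial m (coeff m p) = (C (coeff m p)) * monomial m 1 := by
        rw [C_mul_monomial, mul_one]
      rw [this]
      exact Ideal.mul_mem_left _ _ (monomial_mem_varIdeal.mpr hmA)
    · have h0 : aeval f (monomial m (coeff m p)) = monomial m (coeff m p) := by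
        rw [aeval_monomial, monomial_eq]
        push_neg at hmA
        congr 1
        rw [Finsupp.prod, Finsupp.prod]
        refine Finset.prod_congr rfl fun i hi => ?_
        have : i ∉ A := fun hiA => (Finsupp.mem_support_iff.mp hi) (hmA i hiA)
        simp [hf, this]
      rw [h0, sub_self]
      exact zero_mem _
  have hker : varIdeal K A = RingHom.ker (aeval f : MvPolynomial (Fin n) K →ₐ[K] MvPolynomial (Fin n) K) := by
    apply le_antisymm
    · rw [varIdeal, Ideal.span_le]
      rintro x ⟨i, hiA, rfl⟩
      rw [SetLike.mem_coe, RingHom.mem_ker, aeval_X]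
      simp [hf, Finset.mem_coe.mp hiA]
    · intro p hp
      rw [RingHom.mem_ker] at hp
      have := key p
      rw [hp, zero_sub] at this
      simpa using neg_mem this
  rw [hker]
  exact RingHom.ker_isPrime _

lemma prodX_mem_prime {Q : Ideal (MvPolynomial (Fin n) K)} (hQ : Q.IsPrime)
    {F : Finset (Fin n)} (h : (∏ i ∈ F, (X i : MvPolynomial (Fin n) K)) ∈ Q) :
    ∃ i ∈ F, (X i : MvPolynomial (Fin n) K) ∈ Q := by
  classical
  induction F using Finset.induction with
  | empty => simp at h; exact absurd (Q.eq_top_of_isUnit_mem h isUnit_one) hQ.ne_top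
  | insert a s hx ih =>
    rw [Finset.prod_insert hx] at h
    rcases hQ.mem_or_mem h with h1 | h2
    · exact ⟨a, Finset.mem_insert_self _ _, h1⟩
    · obtain ⟨i, hi, hXi⟩ := ih h2
      exact ⟨i, Finset.mem_insert_of_mem hi, hXi⟩

lemma monomial_mem_prime_iff {Q : Ideal (MvPolynomial (Fin n) K)} (hQ : Q.IsPrime)
    {a : Fin n →₀ ℕ} :
    monomial a (1 : K) ∈ Q ↔ ∃ i ∈ a.support, (X i : MvPolynomial (Fin n) K) ∈ Q := by
  constructor
  · intro h
    rw [monomial_eq, map_one, one_mul, Finsupp.prod] at h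
    have : ∃ i ∈ a.support, (X i : MvPolynomial (Fin n) K) ^ a i ∈ Q := by
      by_contra hc
      push_neg at hc
      exact (Finset.prod_induction _ (· ∉ Q)
        (fun x y hx hy hxy => (hQ.mem_or_mem hxy).elim hx hy)
        (fun h1 => hQ.ne_top (Q.eq_top_of_isUnit_mem h1 isUnit_one)) hc) h
    obtain ⟨i, hi, hpow⟩ := this
    exact ⟨i, hi, hQ.mem_of_pow_mem _ hpow⟩
  · rintro ⟨i, hi, hXi⟩
    rw [Finsupp.mem_support_iff] at hi
    have ha : a = Finsupp.single i 1 + (a - Finsupp.single i 1) := by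
      ext j
      by_cases hij : i = j
      · subst hij
        simp [Finsupp.single_apply]
        omega
      · simp [Finsupp.single_apply, hij, Finsupp.tsub_apply]
    have : monomial a (1 : K) = X i * monomial (a - Finsupp.single i 1) 1 := by
      rw [X, monomial_mul, one_mul, ← ha]
    rw [this]
    exact Q.mul_mem_right _ hXi

end KDC
namespace KDC

open Finset

variable {K : Type*} [Field K] {n : ℕ}

lemma exists_facet {D : Finset (Finset (Fin n))} {F : Finset (Fin n)} (hF : F ∈ D) :
    ∃ G, IsFacetOf D G ∧ F ⊆ G := by
  classical
  obtain ⟨a, ha, hmax⟩ := Finset.exists_maximal (s := D.filter (fun G => F ⊆ G))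
    ⟨F, Finset.mem_filter.mpr ⟨hF, subset_rfl⟩⟩
  rw [Finset.mem_filter] at ha
  refine ⟨a, ⟨ha.1, fun G hG hsub => ?_⟩, ha.2⟩
  by_contra hne
  exact hne (Finset.Subset.antisymm hsub (hmax (Finset.mem_filter.mpr ⟨hG, ha.2.trans hsub⟩) hsub))

lemma srIdeal_le_varIdeal_compl {D : Finset (Finset (Fin n))} (hD : IsSimplicialComplex D)
    {F : Finset (Fin n)} (hF : F ∈ D) :
    srIdeal K D ≤ varIdeal K Fᶜ := by
  rw [srIdeal, Ideal.span_le]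
  rintro x ⟨G, hG, rfl⟩
  simp only [Set.mem_setOf_eq] at hG
  have : ∃ i ∈ G, i ∉ F := by
    by_contra hc
    push_neg at hc
    exact hG (hD _ hF _ hc)
  obtain ⟨i, hiG, hiF⟩ := this
  show (∏ j ∈ G, (X j : MvPolynomial (Fin n) K)) ∈ varIdeal K Fᶜ
  rw [← Finset.mul_prod_erase _ _ hiG]
  exact Ideal.mul_mem_right _ _ (X_mem_varIdeal.mpr (Finset.mem_compl.mpr hiF))

lemma facet_minimalPrime {D : Finset (Finset (Fin n))} (hD : IsSimplicialComplex D)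
    {F : Finset (Fin n)} (hF : IsFacetOf D F) :
    varIdeal K Fᶜ ∈ (srIdeal K D).minimalPrimes := by
  classical
  refine ⟨⟨varIdeal_isPrime _, srIdeal_le_varIdeal_compl hD hF.1⟩, ?_⟩
  rintro Q ⟨hQp, hQle⟩ hQP
  rw [varIdeal, Ideal.span_le]
  rintro x ⟨i, hiF, rfl⟩
  have hiF : i ∉ F := Finset.mem_compl.mp hiF
  have hnface : insert i F ∉ D := by
    intro hmem
    exact hiF (hF.2 _ hmem (Finset.subset_insert _ _) ▸ Finset.mem_insert_self i F)
  have hprod : (∏ j ∈ insert i F, (X j : MvPolynomial (Fin n) K)) ∈ Q :=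
    hQle (prodX_mem_srIdeal hD |>.mpr hnface)
  obtain ⟨j, hj, hXj⟩ := prodX_mem_prime hQp hprod
  have hjF : j ∉ F := Finset.mem_compl.mp (X_mem_varIdeal.mp (hQP hXj))
  rcases Finset.mem_insert.mp hj with rfl | hjF'
  · exact hXj
  · exact absurd hjF' hjF

lemma minimalPrime_eq_facet {D : Finset (Finset (Fin n))} (hD : IsSimplicialComplex D)
    {Q : Ideal (MvPolynomial (Fin n) K)} (hQ : Q ∈ (srIdeal K D).minimalPrimes) :
    ∃ F, IsFacetOf D F ∧ Q = varIdeal K Fᶜ := by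
  classical
  obtain ⟨⟨hQp, hle⟩, hmin⟩ := hQ
  set A : Finset (Fin n) := Finset.univ.filter (fun i => (X i : MvPolynomial (Fin n) K) ∈ Q)
    with hA
  have hAc : Aᶜ ∈ D := by
    by_contra hc
    have := hle ((prodX_mem_srIdeal hD (K := K)).mpr hc)
    obtain ⟨i, hi, hXi⟩ := prodX_mem_prime hQp this
    rw [Finset.mem_compl, hA, Finset.mem_filter] at hi
    exact hi ⟨Finset.mem_univ _, hXi⟩
  obtain ⟨G, hGfac, hGsub⟩ := exists_facet hAc
  have hvle : varIdeal K Gᶜ ≤ Q := by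
    rw [varIdeal, Ideal.span_le]
    rintro x ⟨i, hiG, rfl⟩
    have : i ∈ A := by
      have h1 : Gᶜ ⊆ A := by
        intro j hj
        by_contra hjA
        exact Finset.mem_compl.mp hj (hGsub (Finset.mem_compl.mpr hjA))
      exact h1 (Finset.mem_coe.mp hiG)
    rw [hA, Finset.mem_filter] at this
    exact this.2
  have hQv : Q ≤ varIdeal K Gᶜ :=
    hmin ⟨varIdeal_isPrime _, srIdeal_le_varIdeal_compl hD hGfac.1⟩ hvle
  exact ⟨G, hGfac, le_antisymm hQv hvle⟩

lemma exists_facets_finset (D : Finset (Finset (Fin n))) :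
    ∃ fs : Finset (Finset (Fin n)), ∀ F, F ∈ fs ↔ IsFacetOf D F := by
  classical
  exact ⟨D.filter (fun F => IsFacetOf D F), by
    intro F
    rw [Finset.mem_filter]
    exact ⟨fun h => h.2, fun h => ⟨h.1, h⟩⟩⟩

lemma srIdeal_eq_inf {D : Finset (Finset (Fin n))} (hD : IsSimplicialComplex D)
    {fs : Finset (Finset (Fin n))} (hfac : ∀ F, F ∈ fs ↔ IsFacetOf D F) :
    srIdeal K D = fs.inf (fun F => varIdeal K Fᶜ) := by
  apply le_antisymm
  · refine Finset.le_inf fun F hF => srIdeal_le_varIdeal_compl hD ((hfac F).mp hF).1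
  · intro p hp
    rw [Submodule.mem_finsetInf] at hp
    rw [mem_srIdeal_iff]
    intro m hm
    refine ⟨m.support, ?_, subset_rfl⟩
    by_contra hc
    obtain ⟨G, hGfac, hGsub⟩ := exists_facet hc
    obtain ⟨i, hi, hine⟩ := mem_varIdeal_iff.mp (hp G ((hfac G).mpr hGfac)) m hm
    exact Finset.mem_compl.mp hi (hGsub (Finsupp.mem_support_iff.mpr hine))

lemma srIdeal_radical {D : Finset (Finset (Fin n))} (hD : IsSimplicialComplex D) :
    (srIdeal K D).radical = srIdeal K D := by
  classical
  obtain ⟨fs, hfac⟩ := exists_facets_finset D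
  rw [srIdeal_eq_inf hD hfac]
  refine le_antisymm (Finset.le_inf fun F hF => ?_) Ideal.le_radical
  calc (fs.inf (fun F => varIdeal K Fᶜ)).radical
      ≤ (varIdeal K Fᶜ).radical := Ideal.radical_mono (Finset.inf_le hF)
    _ = varIdeal K Fᶜ := (varIdeal_isPrime _).radical

lemma minimalPrimes_congr {I J : Ideal (MvPolynomial (Fin n) K)}
    (h : I.radical = J.radical) : I.minimalPrimes = J.minimalPrimes := by
  have hpred : (fun q : Ideal (MvPolynomial (Fin n) K) => q.IsPrime ∧ I ≤ q)
      = fun q => q.IsPrime ∧ J ≤ q := by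
    funext q
    refine propext (and_congr_right fun hq => ?_)
    rw [← hq.radical_le_iff, h, hq.radical_le_iff]
  unfold Ideal.minimalPrimes Ideal.IsMinimalPrime
  rw [hpred]

lemma noEmbeddedPrimes_srIdeal {D : Finset (Finset (Fin n))} (hD : IsSimplicialComplex D) :
    NoEmbeddedPrimes (srIdeal K D) := by
  classical
  intro P hP
  obtain ⟨hPrime, x, hann⟩ := hP
  obtain ⟨y, rfl⟩ := Ideal.Quotient.mk_surjective x
  have hPmem : ∀ r, r ∈ P ↔ r * y ∈ srIdeal K D := by
    intro r
    rw [hann, Ideal.mem_radical_iff]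
    have e : ∀ k : ℕ, (r ^ k ∈ (⊥ : Submodule (MvPolynomial (Fin n) K)
        (MvPolynomial (Fin n) K ⧸ srIdeal K D)).colon {Ideal.Quotient.mk (srIdeal K D) y}
          ↔ r ^ k * y ∈ srIdeal K D) := fun k => by
      rw [Submodule.mem_colon_singleton, Submodule.mem_bot]
      rw [show r ^ k • (Ideal.Quotient.mk (srIdeal K D) y)
        = Ideal.Quotient.mk (srIdeal K D) (r ^ k * y) from rfl]
      exact Ideal.Quotient.eq_zero_iff_mem
    simp only [e]
    constructor
    · rintro ⟨k, hk⟩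
      apply (srIdeal_radical (K := K) hD).le
      rw [Ideal.mem_radical_iff]
      refine ⟨k + 1, ?_⟩
      have : (r * y) ^ (k + 1) = (r ^ k * y) * (r * y ^ k) := by ring
      rw [this]
      exact Ideal.mul_mem_right _ _ hk
    · intro h
      exact ⟨1, by rwa [pow_one]⟩
  obtain ⟨fs, hfac⟩ := exists_facets_finset D
  set T : Finset (Finset (Fin n)) := fs.filter (fun F => y ∉ varIdeal K Fᶜ) with hT
  have hPeq : P = T.inf (fun F => varIdeal K Fᶜ) := by
    ext r
    rw [Submodule.mem_finsetInf, hPmem, srIdeal_eq_inf hD hfac, Submodule.mem_finsetInf]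
    constructor
    · intro h F hF
      rw [hT, Finset.mem_filter] at hF
      rcases (varIdeal_isPrime (K := K) Fᶜ).mem_or_mem (h F hF.1) with h1 | h2
      · exact h1
      · exact absurd h2 hF.2
    · intro h F hF
      by_cases hy : y ∈ varIdeal K Fᶜ
      · exact Ideal.mul_mem_left _ _ hy
      · exact Ideal.mul_mem_right _ _ (h F (Finset.mem_filter.mpr ⟨hF, hy⟩))
  have hex : ∃ F ∈ T, varIdeal K Fᶜ ≤ P := by
    rw [← hPrime.inf_le']
    exact hPeq.ge
  obtain ⟨F, hFT, hle⟩ := hex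
  have hPle : P ≤ varIdeal K Fᶜ := hPeq.le.trans (Finset.inf_le hFT)
  have : P = varIdeal K Fᶜ := le_antisymm hPle hle
  rw [this]
  exact facet_minimalPrime hD ((hfac F).mp (Finset.mem_filter.mp hFT).1)

end KDC
namespace KDC

open Finset

variable {K : Type*} [Field K] {n : ℕ}

lemma mem_starC {D : Finset (Finset (Fin n))} {s F : Finset (Fin n)} :
    F ∈ starC D s ↔ F ∈ D ∧ s ∪ F ∈ D := Finset.mem_filter

lemma mem_starC' {D : Finset (Finset (Fin n))} (hD : IsSimplicialComplex D)
    {s F : Finset (Fin n)} : F ∈ starC D s ↔ s ∪ F ∈ D := by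
  rw [mem_starC]
  exact ⟨fun h => h.2, fun h => ⟨hD _ h _ Finset.subset_union_right, h⟩⟩

lemma mem_delC {D : Finset (Finset (Fin n))} {s F : Finset (Fin n)} :
    F ∈ delC D s ↔ F ∈ D ∧ ¬s ⊆ F := Finset.mem_filter

lemma mem_linkC {D : Finset (Finset (Fin n))} {s F : Finset (Fin n)} :
    F ∈ linkC D s ↔ F ∈ D ∧ s ∩ F = ∅ ∧ s ∪ F ∈ D := Finset.mem_filter

lemma starC_simplicial {D : Finset (Finset (Fin n))} (hD : IsSimplicialComplex D)
    (s : Finset (Fin n)) : IsSimplicialComplex (starC D s) := by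
  intro F hF G hG
  rw [mem_starC] at hF ⊢
  exact ⟨hD _ hF.1 _ hG, hD _ hF.2 _ (Finset.union_subset_union_right hG)⟩

lemma delC_simplicial {D : Finset (Finset (Fin n))} (hD : IsSimplicialComplex D)
    (s : Finset (Fin n)) : IsSimplicialComplex (delC D s) := by
  intro F hF G hG
  rw [mem_delC] at hF ⊢
  exact ⟨hD _ hF.1 _ hG, fun hs => hF.2 (hs.trans hG)⟩

lemma linkC_simplicial {D : Finset (Finset (Fin n))} (hD : IsSimplicialComplex D)
    (s : Finset (Fin n)) : IsSimplicialComplex (linkC D s) := by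
  intro F hF G hG
  rw [mem_linkC] at hF ⊢
  refine ⟨hD _ hF.1 _ hG, ?_, hD _ hF.2.2 _ (Finset.union_subset_union_right hG)⟩
  rw [← Finset.subset_empty, ← hF.2.1]
  exact Finset.inter_subset_inter subset_rfl hG

lemma mul_monomial_mem_srIdeal {D : Finset (Finset (Fin n))}
    {p : MvPolynomial (Fin n) K} {a : Fin n →₀ ℕ} :
    p * monomial a 1 ∈ srIdeal K D ↔
      ∀ m ∈ p.support, ∃ F, F ∉ D ∧ F ⊆ (m + a).support := by
  rw [mem_srIdeal_iff]
  constructor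
  · intro h m hm
    have hmem : m + a ∈ (p * monomial a (1 : K)).support := by
      rw [MvPolynomial.mem_support_iff, coeff_mul_monomial', if_pos le_add_self,
        add_tsub_cancel_right, mul_one]
      exact MvPolynomial.mem_support_iff.mp hm
    exact h _ hmem
  · intro h m hm
    rw [MvPolynomial.mem_support_iff, coeff_mul_monomial'] at hm
    split at hm
    · next hle =>
      have hm' : m - a ∈ p.support := by
        rw [MvPolynomial.mem_support_iff]
        intro hc
        rw [hc, zero_mul] at hm
        exact hm rfl
      obtain ⟨F, hF, hsub⟩ := h _ hm'
      rw [tsub_add_cancel_of_le hle] at hsub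
      exact ⟨F, hF, hsub⟩
    · exact absurd rfl hm

lemma colon_srIdeal {D : Finset (Finset (Fin n))} (hD : IsSimplicialComplex D)
    {a : Fin n →₀ ℕ} :
    Submodule.colon (srIdeal K D) (Ideal.span {monomial a (1 : K)})
      = srIdeal K (starC D a.support) := by
  classical
  ext p
  rw [show (Ideal.span {monomial a (1:K)}) = Submodule.span (MvPolynomial (Fin n) K)
    {monomial a (1:K)} from rfl]
  rw [Submodule.mem_colon_span_singleton, smul_eq_mul, mul_monomial_mem_srIdeal, mem_srIdeal_iff]
  refine forall₂_congr fun m _ => ?_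
  rw [support_add_eq']
  constructor
  · rintro ⟨F, hF, hsub⟩
    refine ⟨F \ a.support, ?_, ?_⟩
    · rw [mem_starC' hD]
      intro hmem
      refine hF (hD _ hmem _ ?_)
      intro i hi
      rw [Finset.mem_union]
      by_cases hia : i ∈ a.support
      · exact Or.inl hia
      · exact Or.inr (Finset.mem_sdiff.mpr ⟨hi, hia⟩)
    · intro i hi
      rw [Finset.mem_sdiff] at hi
      rcases Finset.mem_union.mp (hsub hi.1) with h1 | h2
      · exact h1
      · exact absurd h2 hi.2
  · rintro ⟨G, hG, hsub⟩
    refine ⟨a.support ∪ G, ?_, ?_⟩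
    · intro hmem
      rw [mem_starC' hD] at hG
      exact hG hmem
    · rw [Finset.union_comm m.support]
      exact Finset.union_subset_union subset_rfl hsub

lemma sum_srIdeal {D : Finset (Finset (Fin n))} (hD : IsSimplicialComplex D)
    (t : Finset (Fin n)) :
    srIdeal K D + Ideal.span {monomial (expF t) (1 : K)} = srIdeal K (delC D t) := by
  classical
  have hdel : IsSimplicialComplex (delC D t) := delC_simplicial hD t
  rw [Submodule.add_eq_sup]
  apply le_antisymm
  · rw [sup_le_iff]
    constructor
    · rw [srIdeal, srIdeal, Ideal.span_le]
      rintro x ⟨G, hG, rfl⟩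
      apply Ideal.subset_span
      refine ⟨G, ?_, rfl⟩
      simp only [Set.mem_setOf_eq] at hG ⊢
      rw [mem_delC]
      tauto
    · rw [Ideal.span_singleton_le_iff_mem, monomial_expF, prodX_mem_srIdeal hdel, mem_delC]
      intro h
      exact h.2 subset_rfl
  · rw [srIdeal, Ideal.span_le]
    rintro x ⟨G, hG, rfl⟩
    simp only [Set.mem_setOf_eq, mem_delC] at hG
    push_neg at hG
    by_cases hGD : G ∈ D
    · have htG : t ⊆ G := hG hGD
      show (∏ i ∈ G, (X i : MvPolynomial (Fin n) K)) ∈ _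
      rw [← Finset.prod_sdiff htG]
      refine Submodule.mem_sup_right ?_
      exact Ideal.mul_mem_left _ _ (by rw [← monomial_expF]; exact Ideal.subset_span rfl)
    · refine Submodule.mem_sup_left ?_
      show (∏ i ∈ G, (X i : MvPolynomial (Fin n) K)) ∈ _
      rw [prodX_mem_srIdeal hD]
      exact hGD

end KDC
namespace KDC

open Finset

variable {K : Type*} [Field K] {n : ℕ}

lemma isMonomialIdeal_srIdeal (D : Finset (Finset (Fin n))) :
    IsMonomialIdeal (srIdeal K D) :=
  ⟨expF '' {F | F ∉ D}, srIdeal_eq D⟩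

lemma isMonomialIdeal_add {I : Ideal (MvPolynomial (Fin n) K)} (hI : IsMonomialIdeal I)
    (a : Fin n →₀ ℕ) : IsMonomialIdeal (I + Ideal.span {monomial a (1 : K)}) := by
  obtain ⟨G, rfl⟩ := hI
  refine ⟨G ∪ {a}, ?_⟩
  rw [Set.image_union, Ideal.span_union, Submodule.add_eq_sup, Set.image_singleton]

lemma isMonomialIdeal_colon {I : Ideal (MvPolynomial (Fin n) K)} (hI : IsMonomialIdeal I)
    (a : Fin n →₀ ℕ) :
    IsMonomialIdeal (Submodule.colon I (Ideal.span {monomial a (1 : K)})) := by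
  classical
  set J := Submodule.colon I (Ideal.span {monomial a (1 : K)}) with hJ
  refine ⟨{b | monomial b (1 : K) ∈ J}, le_antisymm ?_ ?_⟩
  · intro p hp
    obtain ⟨G, hG⟩ := hI
    have hpu : p * monomial a 1 ∈ I := by
      have := Submodule.mem_colon_span_singleton.mp hp
      rwa [smul_eq_mul] at this
    rw [mem_ideal_span_monomial_image]
    intro m hm
    refine ⟨m, ⟨?_, le_rfl⟩⟩
    simp only [Set.mem_setOf_eq]
    rw [hJ]
    rw [show (Ideal.span {monomial a (1:K)}) = Submodule.span (MvPolynomial (Fin n) K)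
      {monomial a (1:K)} from rfl]
    rw [Submodule.mem_colon_span_singleton, smul_eq_mul, monomial_mul, mul_one]
    rw [hG] at hpu ⊢
    rw [mem_ideal_span_monomial_image] at hpu ⊢
    intro m' hm'
    classical
    rw [support_monomial] at hm'
    simp only [if_neg (one_ne_zero : (1:K) ≠ 0), Finset.mem_singleton] at hm'
    subst hm'
    apply hpu
    rw [MvPolynomial.mem_support_iff, coeff_mul_monomial', if_pos le_add_self,
      add_tsub_cancel_right, mul_one]
    exact MvPolynomial.mem_support_iff.mp hm
  · rw [Ideal.span_le]
    rintro x ⟨b, hb, rfl⟩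
    exact hb

lemma monomial_support_mem_radical {I : Ideal (MvPolynomial (Fin n) K)}
    {g : Fin n →₀ ℕ} (hg : monomial g (1 : K) ∈ I) :
    monomial (expF g.support) (1 : K) ∈ I.radical := by
  classical
  rw [Ideal.mem_radical_iff]
  set N : ℕ := ∑ i ∈ g.support, g i with hN
  refine ⟨N, ?_⟩
  rw [monomial_pow, one_pow]
  have hle : g ≤ N • expF g.support := by
    rw [Finsupp.le_def]
    intro i
    rw [Finsupp.smul_apply, expF_apply, smul_eq_mul]
    by_cases hi : i ∈ g.support
    · rw [if_pos hi, mul_one, hN]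
      exact Finset.single_le_sum (fun j _ => Nat.zero_le _) hi
    · rw [Finsupp.notMem_support_iff] at hi
      omega
  have : monomial (N • expF g.support) (1 : K)
      = monomial g 1 * monomial (N • expF g.support - g) 1 := by
    rw [monomial_mul, mul_one, add_tsub_cancel_of_le hle]
  rw [this]
  exact Ideal.mul_mem_right _ _ hg

lemma exists_complex_of_monomial {J : Ideal (MvPolynomial (Fin n) K)}
    (hJ : IsMonomialIdeal J) :
    ∃ E : Finset (Finset (Fin n)), IsSimplicialComplex E ∧ srIdeal K E = J.radical ∧
      ∀ F, F ∈ E ↔ monomial (expF F) (1 : K) ∉ J.radical := by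
  classical
  set E : Finset (Finset (Fin n)) :=
    Finset.univ.filter (fun F => monomial (expF F) (1 : K) ∉ J.radical) with hE
  have hmem : ∀ F, F ∈ E ↔ monomial (expF F) (1 : K) ∉ J.radical := by
    intro F
    rw [hE, Finset.mem_filter]
    simp
  have hsimp : IsSimplicialComplex E := by
    intro F hF G hG
    rw [hmem] at hF ⊢
    intro hc
    refine hF ?_
    rw [monomial_expF] at hc ⊢
    rw [← Finset.prod_sdiff hG]
    exact Ideal.mul_mem_left _ _ hc
  refine ⟨E, hsimp, le_antisymm ?_ ?_, hmem⟩
  · rw [srIdeal, Ideal.span_le]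
    rintro x ⟨F, hF, rfl⟩
    simp only [Set.mem_setOf_eq, hmem, not_not] at hF
    show (∏ i ∈ F, (X i : MvPolynomial (Fin n) K)) ∈ J.radical
    rw [← monomial_expF]
    exact hF
  · have hJle : J ≤ srIdeal K E := by
      obtain ⟨G, rfl⟩ := hJ
      rw [Ideal.span_le]
      rintro x ⟨g, hg, rfl⟩
      rw [SetLike.mem_coe, monomial_mem_srIdeal]
      refine ⟨g.support, ?_, le_rfl⟩
      rw [hmem, not_not]
      exact monomial_support_mem_radical (Ideal.subset_span ⟨g, hg, rfl⟩)
    calc J.radical ≤ (srIdeal K E).radical := Ideal.radical_mono hJle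
      _ = srIdeal K E := srIdeal_radical hsimp

lemma prime_le_sum_iff {D : Finset (Finset (Fin n))} (hD : IsSimplicialComplex D)
    {I : Ideal (MvPolynomial (Fin n) K)} (hrad : I.radical = srIdeal K D)
    {Q : Ideal (MvPolynomial (Fin n) K)} (hQ : Q.IsPrime) (a : Fin n →₀ ℕ) :
    I + Ideal.span {monomial a (1 : K)} ≤ Q ↔ srIdeal K (delC D a.support) ≤ Q := by
  rw [Submodule.add_eq_sup, sup_le_iff, Ideal.span_singleton_le_iff_mem]
  rw [← sum_srIdeal hD a.support, Submodule.add_eq_sup, sup_le_iff,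
    Ideal.span_singleton_le_iff_mem]
  constructor
  · rintro ⟨h1, h2⟩
    refine ⟨?_, ?_⟩
    · rw [← hQ.radical_le_iff, hrad] at h1
      exact h1
    · rw [monomial_mem_prime_iff hQ] at h2 ⊢
      rwa [support_expF]
  · rintro ⟨h1, h2⟩
    refine ⟨?_, ?_⟩
    · rw [← hQ.radical_le_iff, hrad]
      exact h1
    · rw [monomial_mem_prime_iff hQ] at h2 ⊢
      rwa [support_expF] at h2

lemma radical_add_eq {D : Finset (Finset (Fin n))} (hD : IsSimplicialComplex D)
    {I : Ideal (MvPolynomial (Fin n) K)} (hrad : I.radical = srIdeal K D) (a : Fin n →₀ ℕ) :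
    (I + Ideal.span {monomial a (1 : K)}).radical = srIdeal K (delC D a.support) := by
  rw [← srIdeal_radical (delC_simplicial hD a.support)]
  rw [Ideal.radical_eq_sInf, Ideal.radical_eq_sInf]
  congr 1
  ext Q
  simp only [Set.mem_setOf_eq]
  constructor
  · rintro ⟨h1, h2⟩
    exact ⟨(prime_le_sum_iff hD hrad h2 a).mp h1, h2⟩
  · rintro ⟨h1, h2⟩
    exact ⟨(prime_le_sum_iff hD hrad h2 a).mpr h1, h2⟩

lemma radical_colon_sandwich {D : Finset (Finset (Fin n))} (hD : IsSimplicialComplex D)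
    {I : Ideal (MvPolynomial (Fin n) K)} (hrad : I.radical = srIdeal K D) (a : Fin n →₀ ℕ) :
    srIdeal K D ≤ (Submodule.colon I (Ideal.span {monomial a (1 : K)})).radical ∧
      (Submodule.colon I (Ideal.span {monomial a (1 : K)})).radical
        ≤ srIdeal K (starC D a.support) := by
  constructor
  · rw [← hrad]
    refine le_trans (Ideal.radical_mono ?_) le_rfl
    intro r hr
    rw [show (Ideal.span {monomial a (1:K)}) = Submodule.span (MvPolynomial (Fin n) K)
      {monomial a (1:K)} from rfl]
    rw [Submodule.mem_colon_span_singleton, smul_eq_mul]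
    exact Ideal.mul_mem_right _ _ hr
  · rw [← srIdeal_radical (starC_simplicial hD a.support)]
    refine Ideal.radical_mono ?_
    intro r hr
    rw [show (Ideal.span {monomial a (1:K)}) = Submodule.span (MvPolynomial (Fin n) K)
      {monomial a (1:K)} from rfl] at hr
    rw [Submodule.mem_colon_span_singleton, smul_eq_mul] at hr
    rw [← colon_srIdeal hD]
    rw [show (Ideal.span {monomial a (1:K)}) = Submodule.span (MvPolynomial (Fin n) K)
      {monomial a (1:K)} from rfl]
    rw [Submodule.mem_colon_span_singleton, smul_eq_mul]
    have : r * monomial a 1 ∈ I.radical := Ideal.le_radical hr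
    rw [hrad] at this
    exact this

end KDC
namespace KDC

open Finset

variable {K : Type*} [Field K] {n : ℕ}

lemma facet_del_facet {D : Finset (Finset (Fin n))} (hD : IsSimplicialComplex D)
    {I : Ideal (MvPolynomial (Fin n) K)} (hrad : I.radical = srIdeal K D) (a : Fin n →₀ ℕ)
    (hmin : (I + Ideal.span {monomial a (1 : K)}).minimalPrimes ⊆ I.minimalPrimes) :
    ∀ G, IsFacetOf (delC D a.support) G → IsFacetOf D G := by
  have e1 : (I + Ideal.span {monomial a (1 : K)}).minimalPrimes
      = (srIdeal K (delC D a.support)).minimalPrimes :=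
    minimalPrimes_congr (K := K)
      (by rw [radical_add_eq hD hrad a, srIdeal_radical (delC_simplicial hD _)])
  have e2 : I.minimalPrimes = (srIdeal K D).minimalPrimes :=
    minimalPrimes_congr (K := K) (by rw [hrad, srIdeal_radical hD])
  intro G hG
  have h1 := facet_minimalPrime (K := K) (delC_simplicial hD a.support) hG
  rw [← e1] at h1
  have h2 := hmin h1
  rw [e2] at h2
  obtain ⟨F', hF', heq⟩ := minimalPrime_eq_facet hD h2
  have hc : Gᶜ = F'ᶜ := varIdeal_inj heq
  have : G = F' := compl_injective hc
  rw [this]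
  exact hF'

lemma kclean_to_kdec {k : ℕ} {I : Ideal (MvPolynomial (Fin n) K)}
    (h : KClean K (Fin n) k I) :
    ∀ (D : Finset (Finset (Fin n))) (s : Finset (Fin n)), IsMonomialIdeal I →
      IsSimplicialComplex D → I.radical = srIdeal K D → KDecomposable k (linkC D s) := by
  induction h with
  | prime I hp =>
    intro D s _ hD hrad
    classical
    rw [hp.radical] at hrad
    set Fmax : Finset (Fin n) := Finset.univ.filter (fun i => ({i} : Finset (Fin n)) ∈ D)
      with hFmax
    have hXmem : ∀ i : Fin n, (X i : MvPolynomial (Fin n) K) ∈ I ↔ ({i} : Finset (Fin n)) ∉ D := by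
      intro i
      rw [hrad, ← Finset.prod_singleton (f := fun j => (X j : MvPolynomial (Fin n) K)) (a := i),
        prodX_mem_srIdeal hD]
    have hDmem : ∀ F, F ∈ D ↔ F ⊆ Fmax := by
      intro F
      constructor
      · intro hF i hi
        rw [hFmax, Finset.mem_filter]
        exact ⟨Finset.mem_univ _, hD _ hF _ (Finset.singleton_subset_iff.mpr hi)⟩
      · intro hF
        by_contra hc
        have : (∏ i ∈ F, (X i : MvPolynomial (Fin n) K)) ∈ I := by
          rw [hrad, prodX_mem_srIdeal hD]; exact hc
        obtain ⟨i, hiF, hXi⟩ := prodX_mem_prime hp this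
        have := hF hiF
        rw [hFmax, Finset.mem_filter] at this
        exact (hXmem i).mp hXi this.2
    by_cases hs : s ⊆ Fmax
    · have hlink : linkC D s = (Fmax \ s).powerset := by
        ext F
        rw [mem_linkC, Finset.mem_powerset]
        constructor
        · rintro ⟨hFD, hsF, _⟩
          intro i hi
          rw [Finset.mem_sdiff]
          refine ⟨(hDmem F).mp hFD hi, fun hic => ?_⟩
          have : i ∈ s ∩ F := Finset.mem_inter.mpr ⟨hic, hi⟩
          rw [hsF] at this
          exact absurd this (Finset.notMem_empty i)
        · intro hF
          have hFD : F ∈ D := (hDmem F).mpr (hF.trans Finset.sdiff_subset)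
          refine ⟨hFD, ?_, ?_⟩
          · rw [Finset.eq_empty_iff_forall_notMem]
            intro i hi
            rw [Finset.mem_inter] at hi
            have := hF hi.2
            rw [Finset.mem_sdiff] at this
            exact this.2 hi.1
          · rw [hDmem]
            exact Finset.union_subset hs (hF.trans Finset.sdiff_subset)
      rw [hlink]
      exact KDecomposable.simplex _
    · have hlink : linkC D s = ∅ := by
        rw [Finset.eq_empty_iff_forall_notMem]
        intro F hF
        rw [mem_linkC] at hF
        exact hs fun i hi => (hDmem _).mp hF.2.2 (Finset.mem_union_left _ hi)
      rw [hlink]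
      exact KDecomposable.empty
  | step I a hne hcl hsupp hcolon hsum ihcolon ihsum =>
    intro D s hmono hD hrad
    classical
    obtain ⟨hane, hnotmem, hmin⟩ := hcl
    have hmonoc : IsMonomialIdeal (Submodule.colon I (Ideal.span {monomial a (1 : K)})) :=
      isMonomialIdeal_colon hmono a
    have hmonos : IsMonomialIdeal (I + Ideal.span {monomial a (1 : K)}) :=
      isMonomialIdeal_add hmono a
    have hdelsimp : IsSimplicialComplex (delC D a.support) := delC_simplicial hD _
    have ihsum' := ihsum (delC D a.support) s hmonos hdelsimp (radical_add_eq hD hrad a)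
    by_cases hst : s ∪ a.support ∈ D
    · -- the union of `s` and the support is a face
      obtain ⟨E, hEs, hEeq, hEmem⟩ := exists_complex_of_monomial hmonoc
      obtain ⟨h1, h2⟩ := radical_colon_sandwich hD hrad a
      have hsub1 : ∀ F, F ∈ starC D a.support → F ∈ E := by
        intro F hF
        rw [hEmem, ← hEeq]
        intro hc
        have := h2 (hEeq ▸ hc)
        rw [monomial_mem_srIdeal' (starC_simplicial hD a.support), support_expF] at this
        exact this hF
      have hsub2 : ∀ F, F ∈ E → F ∈ D := by
        intro F hF
        rw [hEmem] at hF
        by_contra hc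
        refine hF (h1 ?_)
        rw [monomial_mem_srIdeal' hD, support_expF]
        exact hc
      by_cases hb : a.support ⊆ s
      · -- support contained in s : use the colon branch with the same s
        have hlink : linkC E s = linkC D s := by
          ext F
          rw [mem_linkC, mem_linkC]
          constructor
          · rintro ⟨hFE, hi, hu⟩
            exact ⟨hsub2 _ hFE, hi, hsub2 _ hu⟩
          · rintro ⟨hFD, hi, hu⟩
            have hFstar : F ∈ starC D a.support := by
              rw [mem_starC' hD]
              refine hD _ hu _ ?_
              exact Finset.union_subset (hb.trans Finset.subset_union_left)
                Finset.subset_union_right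
            have husstar : s ∪ F ∈ starC D a.support := by
              rw [mem_starC' hD]
              rwa [Finset.union_eq_right.mpr (hb.trans Finset.subset_union_left)]
            exact ⟨hsub1 _ hFstar, hi, hsub1 _ husstar⟩
        rw [← hlink]
        exact ihcolon E s hmonoc hEs hEeq.symm
      · -- the genuinely mixed case : shed the face b = supp a \ s in linkC D s
        set t : Finset (Fin n) := a.support with ht
        set b : Finset (Fin n) := t \ s with hbdef
        set L : Finset (Finset (Fin n)) := linkC D s with hL
        have hsb : s ∪ b = s ∪ t := Finset.union_sdiff_self_eq_union
        have hbs : ∀ i ∈ b, i ∉ s := fun i hi => (Finset.mem_sdiff.mp hi).2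
        have hbt : b ⊆ t := Finset.sdiff_subset
        -- key equivalence : for F with s ∩ F = ∅, t ⊆ s ∪ F ↔ b ⊆ F
        have hkey : ∀ F : Finset (Fin n), s ∩ F = ∅ → (t ⊆ s ∪ F ↔ b ⊆ F) := by
          intro F hsF
          constructor
          · intro h i hi
            rcases Finset.mem_union.mp (h (hbt hi)) with h' | h'
            · exact absurd h' (hbs i hi)
            · exact h'
          · intro h i hi
            by_cases his : i ∈ s
            · exact Finset.mem_union_left _ his
            · exact Finset.mem_union_right _ (h (Finset.mem_sdiff.mpr ⟨hi, his⟩))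
        have hbL : b ∈ L := by
          rw [hL, mem_linkC]
          have hsbD : s ∪ b ∈ D := by rw [hsb]; exact hst
          refine ⟨hD _ hsbD _ Finset.subset_union_right, ?_, hsbD⟩
          rw [Finset.eq_empty_iff_forall_notMem]
          intro i hi
          rw [Finset.mem_inter] at hi
          exact hbs i hi.2 hi.1
        refine KDecomposable.shed _ b ⟨hbL, ?_⟩ ?_ ?_ ?_
        · -- shedding condition
          intro F hFstar hFdel
          obtain ⟨hFstar1, hFstar2⟩ := mem_delC.mp hFstar.1
          obtain ⟨hFL, hbF⟩ := mem_starC.mp hFstar1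
          obtain ⟨hFD, hsF, husF⟩ := mem_linkC.mp hFL
          -- H = F ∪ s lies in delC D t
          have hH : s ∪ F ∈ delC D t := by
            rw [mem_delC]
            refine ⟨husF, fun hc => hFstar2 ((hkey F hsF).mp hc)⟩
          obtain ⟨H', hH'fac, hHH'⟩ := exists_facet hH
          have hH'D : IsFacetOf D H' := facet_del_facet hD hrad a hmin H' hH'fac
          have hsH' : s ⊆ H' := (Finset.subset_union_left).trans hHH'
          have hF'' : H' \ s ∈ delC L b := by
            rw [mem_delC, hL, mem_linkC]
            have hH'D' : H' ∈ D := hH'D.1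
            have h1' : H' \ s ∈ D := hD _ hH'D' _ Finset.sdiff_subset
            have h2' : s ∩ (H' \ s) = ∅ := by
              rw [Finset.eq_empty_iff_forall_notMem]
              intro i hi
              rw [Finset.mem_inter, Finset.mem_sdiff] at hi
              exact hi.2.2 hi.1
            have h3' : s ∪ (H' \ s) = H' := by
              rw [Finset.union_comm, Finset.sdiff_union_of_subset hsH']
            refine ⟨⟨h1', h2', by rw [h3']; exact hH'D'⟩, ?_⟩
            intro hc
            have htH' : t ⊆ H' := by
              intro i hi
              by_cases his : i ∈ s
              · exact hsH' his
              · exact Finset.sdiff_subset (hc (Finset.mem_sdiff.mpr ⟨hi, his⟩))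
            exact (mem_delC.mp (hH'fac.1)).2 htH'
          have hFsub : F ⊆ H' \ s := by
            intro i hi
            rw [Finset.mem_sdiff]
            refine ⟨hHH' (Finset.mem_union_right _ hi), fun his => ?_⟩
            have : i ∈ s ∩ F := Finset.mem_inter.mpr ⟨his, hi⟩
            rw [hsF] at this
            exact absurd this (Finset.notMem_empty i)
          have hFeq : F = H' \ s := hFdel.2 _ hF'' hFsub
          -- now use that b ∪ F is a face of L to contradict maximality of H' in D
          obtain ⟨hbFD, hsbF, hsbFD⟩ := mem_linkC.mp hbF
          obtain ⟨i, hib, hiF⟩ := Finset.not_subset.mp hFstar2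
          have hH'eq : H' = s ∪ F := by
            rw [hFeq, Finset.union_comm, Finset.sdiff_union_of_subset hsH']
          have hsub : H' ⊆ s ∪ (b ∪ F) := by
            rw [hH'eq]
            intro j hj
            rcases Finset.mem_union.mp hj with h' | h'
            · exact Finset.mem_union_left _ h'
            · exact Finset.mem_union_right _ (Finset.mem_union_right _ h')
          have : H' = s ∪ (b ∪ F) := hH'D.2 _ hsbFD hsub
          have hiH' : i ∈ H' := by
            rw [this]
            exact Finset.mem_union_right _ (Finset.mem_union_left _ hib)
          rw [hH'eq, Finset.mem_union] at hiH'
          rcases hiH' with h' | h'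
          · exact hbs i hib h'
          · exact hiF h'
        · -- cardinality
          rw [hbdef]
          exact le_trans (Finset.card_le_card Finset.sdiff_subset) hsupp
        · -- link branch
          have hlk : linkC L b = linkC E (s ∪ t) := by
            ext F
            simp only [hL, mem_linkC]
            constructor
            · rintro ⟨⟨hFD, hsF, husF⟩, hbF, hbuF⟩
              obtain ⟨hbFD, hsbF, hsbFD⟩ := hbuF
              have hstF : s ∪ t ∪ F ∈ D := by
                have : s ∪ (b ∪ F) = s ∪ t ∪ F := by
                  rw [← Finset.union_assoc, hsb]
                rwa [this] at hsbFD
              refine ⟨?_, ?_, ?_⟩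
              · refine hsub1 _ ?_
                rw [mem_starC' hD]
                refine hD _ hstF _ ?_
                intro j hj
                rcases Finset.mem_union.mp hj with h' | h'
                · exact Finset.mem_union_left _ (Finset.mem_union_right _ h')
                · exact Finset.mem_union_right _ h'
              · rw [Finset.eq_empty_iff_forall_notMem]
                intro j hj
                rw [Finset.mem_inter, Finset.mem_union] at hj
                rcases hj.1 with h' | h'
                · have : j ∈ s ∩ F := Finset.mem_inter.mpr ⟨h', hj.2⟩
                  rw [hsF] at this
                  exact absurd this (Finset.notMem_empty j)
                · by_cases hjs : j ∈ s
                  · have : j ∈ s ∩ F := Finset.mem_inter.mpr ⟨hjs, hj.2⟩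
                    rw [hsF] at this
                    exact absurd this (Finset.notMem_empty j)
                  · have hjb : j ∈ b := Finset.mem_sdiff.mpr ⟨h', hjs⟩
                    have : j ∈ b ∩ F := Finset.mem_inter.mpr ⟨hjb, hj.2⟩
                    rw [hbF] at this
                    exact absurd this (Finset.notMem_empty j)
              · refine hsub1 _ ?_
                rw [mem_starC' hD]
                have : t ∪ (s ∪ t ∪ F) = s ∪ t ∪ F := by
                  ext j
                  simp only [Finset.mem_union]
                  tauto
                rw [this]
                exact hstF
            · rintro ⟨hFE, hstF, hstFE⟩
              have hFD : F ∈ D := hsub2 _ hFE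
              have hstFD : s ∪ t ∪ F ∈ D := hsub2 _ hstFE
              have hsF : s ∩ F = ∅ := by
                rw [Finset.eq_empty_iff_forall_notMem]
                intro j hj
                rw [Finset.mem_inter] at hj
                have : j ∈ (s ∪ t) ∩ F := Finset.mem_inter.mpr
                  ⟨Finset.mem_union_left _ hj.1, hj.2⟩
                rw [hstF] at this
                exact absurd this (Finset.notMem_empty j)
              have hbF : b ∩ F = ∅ := by
                rw [Finset.eq_empty_iff_forall_notMem]
                intro j hj
                rw [Finset.mem_inter] at hj
                have : j ∈ (s ∪ t) ∩ F := Finset.mem_inter.mpr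
                  ⟨Finset.mem_union_right _ (hbt hj.1), hj.2⟩
                rw [hstF] at this
                exact absurd this (Finset.notMem_empty j)
              refine ⟨⟨hFD, hsF, hD _ hstFD _ ?_⟩, hbF, ?_⟩
              · intro j hj
                rcases Finset.mem_union.mp hj with h' | h'
                · exact Finset.mem_union_left _ (Finset.mem_union_left _ h')
                · exact Finset.mem_union_right _ h'
              · have hbFD : b ∪ F ∈ D := by
                  refine hD _ hstFD _ ?_
                  intro j hj
                  rcases Finset.mem_union.mp hj with h' | h'
                  · exact Finset.mem_union_left _ (Finset.mem_union_right _ (hbt h'))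
                  · exact Finset.mem_union_right _ h'
                refine ⟨hbFD, ?_, ?_⟩
                · rw [Finset.eq_empty_iff_forall_notMem]
                  intro j hj
                  rw [Finset.mem_inter, Finset.mem_union] at hj
                  rcases hj.2 with h' | h'
                  · exact hbs j h' hj.1
                  · have : j ∈ (s ∪ t) ∩ F := Finset.mem_inter.mpr
                      ⟨Finset.mem_union_left _ hj.1, h'⟩
                    rw [hstF] at this
                    exact absurd this (Finset.notMem_empty j)
                · have : s ∪ (b ∪ F) = s ∪ t ∪ F := by
                    rw [← Finset.union_assoc, hsb]
                  rw [this]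
                  exact hstFD
          rw [hlk]
          exact ihcolon E (s ∪ t) hmonoc hEs hEeq.symm
        · -- deletion branch
          have hdl : delC L b = linkC (delC D t) s := by
            ext F
            simp only [hL, mem_linkC, mem_delC]
            constructor
            · rintro ⟨⟨hFD, hsF, husF⟩, hbF⟩
              have hnts : ¬ t ⊆ s ∪ F := fun hc => hbF ((hkey F hsF).mp hc)
              refine ⟨⟨hFD, fun hc => hnts (hc.trans Finset.subset_union_right)⟩, hsF,
                husF, hnts⟩
            · rintro ⟨⟨hFD, _⟩, hsF, husF, hnts⟩
              exact ⟨⟨hFD, hsF, husF⟩, fun hc => hnts ((hkey F hsF).mpr hc)⟩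
          rw [hdl]
          exact ihsum'
    · -- s ∪ supp a is a non-face : pass to the deletion
      have hlink : linkC (delC D a.support) s = linkC D s := by
        ext F
        rw [mem_linkC, mem_linkC, mem_delC, mem_delC]
        constructor
        · rintro ⟨⟨hFD, _⟩, hi, hu, _⟩
          exact ⟨hFD, hi, hu⟩
        · rintro ⟨hFD, hi, hu⟩
          have h1 : ¬ a.support ⊆ s ∪ F := by
            intro hc
            exact hst (hD _ hu _ (Finset.union_subset Finset.subset_union_left hc))
          have h2 : ¬ a.support ⊆ F := fun hc => h1 (hc.trans Finset.subset_union_right)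
          exact ⟨⟨hFD, h2⟩, hi, hu, h1⟩
      rw [← hlink]
      exact ihsum'

end KDC
namespace KDC

open Finset

variable {K : Type*} [Field K] {n : ℕ}

/-- The join of a simplex on `s` with the complex `E`. -/
def joinC {n : ℕ} (s : Finset (Fin n)) (E : Finset (Finset (Fin n))) :
    Finset (Finset (Fin n)) :=
  Finset.univ.filter (fun F => F \ s ∈ E)

lemma mem_joinC {s : Finset (Fin n)} {E : Finset (Finset (Fin n))} {F : Finset (Fin n)} :
    F ∈ joinC s E ↔ F \ s ∈ E := by
  rw [joinC, Finset.mem_filter]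
  simp

lemma sdiff_eq_self_of_inter {F s : Finset (Fin n)} (h : F ∩ s = ∅) : F \ s = F := by
  ext i
  rw [Finset.mem_sdiff]
  refine ⟨fun hi => hi.1, fun hi => ⟨hi, fun hs => ?_⟩⟩
  have : i ∈ F ∩ s := Finset.mem_inter.mpr ⟨hi, hs⟩
  rw [h] at this
  exact absurd this (Finset.notMem_empty i)

lemma mem_joinC_of_mem {s : Finset (Fin n)} {E : Finset (Finset (Fin n))}
    (hdisj : ∀ F ∈ E, F ∩ s = ∅) {F : Finset (Fin n)} (hF : F ∈ E) : F ∈ joinC s E := by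
  rw [mem_joinC, sdiff_eq_self_of_inter (hdisj F hF)]
  exact hF

lemma joinC_simplicial {s : Finset (Fin n)} {E : Finset (Finset (Fin n))}
    (hE : IsSimplicialComplex E) : IsSimplicialComplex (joinC s E) := by
  intro F hF G hG
  rw [mem_joinC] at hF ⊢
  exact hE _ hF _ (Finset.sdiff_subset_sdiff hG subset_rfl)

lemma isFacetOf_joinC {s : Finset (Fin n)} {M : Finset (Finset (Fin n))}
    (hdisj : ∀ F ∈ M, F ∩ s = ∅) {H : Finset (Fin n)} :
    IsFacetOf (joinC s M) H ↔ ∃ G, IsFacetOf M G ∧ H = s ∪ G := by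
  constructor
  · rintro ⟨hHmem, hHmax⟩
    have hHs : H \ s ∈ M := mem_joinC.mp hHmem
    have hsH : s ⊆ H := by
      have h1 : H ∪ s ∈ joinC s M := by
        rw [mem_joinC, Finset.union_sdiff_right]
        exact hHs
      have := hHmax _ h1 Finset.subset_union_left
      rw [this]
      exact Finset.subset_union_right
    refine ⟨H \ s, ⟨hHs, ?_⟩, ?_⟩
    · intro G' hG' hsub
      have hG'j : H ∪ G' ∈ joinC s M := by
        rw [mem_joinC, Finset.union_sdiff_distrib, sdiff_eq_self_of_inter (hdisj G' hG'),
          Finset.union_eq_right.mpr hsub]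
        exact hG'
      have hHG : H = H ∪ G' := hHmax _ hG'j Finset.subset_union_left
      have hG'H : G' ⊆ H := by
        rw [hHG]
        exact Finset.subset_union_right
      apply Finset.Subset.antisymm hsub
      intro i hi
      rw [Finset.mem_sdiff] at *
      refine ⟨hG'H hi, fun hs' => ?_⟩
      have : i ∈ G' ∩ s := Finset.mem_inter.mpr ⟨hi, hs'⟩
      rw [hdisj G' hG'] at this
      exact absurd this (Finset.notMem_empty i)
    · ext i
      rw [Finset.mem_union, Finset.mem_sdiff]
      by_cases his : i ∈ s
      · simp [his, hsH his]
      · simp [his]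
  · rintro ⟨G, ⟨hGmem, hGmax⟩, rfl⟩
    have hGs : G ∩ s = ∅ := hdisj G hGmem
    constructor
    · rw [mem_joinC, Finset.union_sdiff_left, sdiff_eq_self_of_inter hGs]
      exact hGmem
    · intro H' hH' hsub
      have h1 : G ⊆ H' \ s := by
        intro i hi
        rw [Finset.mem_sdiff]
        refine ⟨hsub (Finset.mem_union_right _ hi), fun hs' => ?_⟩
        have : i ∈ G ∩ s := Finset.mem_inter.mpr ⟨hi, hs'⟩
        rw [hGs] at this
        exact absurd this (Finset.notMem_empty i)
      have h2 : G = H' \ s := hGmax _ (mem_joinC.mp hH') h1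
      apply Finset.Subset.antisymm hsub
      intro i hi
      rw [Finset.mem_union]
      by_cases his : i ∈ s
      · exact Or.inl his
      · exact Or.inr (h2 ▸ Finset.mem_sdiff.mpr ⟨hi, his⟩)

lemma joinC_starC {s t : Finset (Fin n)} {E : Finset (Finset (Fin n))}
    (hts : t ∩ s = ∅) :
    starC (joinC s E) t = joinC s (starC E t) := by
  ext F
  simp only [mem_starC, mem_joinC]
  rw [show (t ∪ F) \ s = t ∪ F \ s from by
    rw [Finset.union_sdiff_distrib, sdiff_eq_self_of_inter hts]]

lemma joinC_delC {s t : Finset (Fin n)} {E : Finset (Finset (Fin n))}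
    (hts : t ∩ s = ∅) :
    delC (joinC s E) t = joinC s (delC E t) := by
  ext F
  rw [mem_delC, mem_joinC, mem_joinC, mem_delC]
  have : t ⊆ F ↔ t ⊆ F \ s := by
    constructor
    · intro h i hi
      rw [Finset.mem_sdiff]
      refine ⟨h hi, fun hs' => ?_⟩
      have : i ∈ t ∩ s := Finset.mem_inter.mpr ⟨hi, hs'⟩
      rw [hts] at this
      exact absurd this (Finset.notMem_empty i)
    · intro h i hi
      exact Finset.mem_sdiff.mp (h hi) |>.1
  rw [this]

lemma joinC_linkC_star {s t : Finset (Fin n)} {E : Finset (Finset (Fin n))}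
    (hE : IsSimplicialComplex E) (hts : t ∩ s = ∅) :
    joinC (s ∪ t) (linkC E t) = starC (joinC s E) t := by
  rw [joinC_starC hts]
  ext F
  simp only [mem_joinC, mem_linkC, mem_starC]
  have hdiff : F \ (s ∪ t) = (F \ s) \ t := by
    ext i
    simp only [Finset.mem_sdiff, Finset.mem_union]
    tauto
  have hun : t ∪ (F \ s) \ t = t ∪ F \ s := by
    ext i
    simp only [Finset.mem_union, Finset.mem_sdiff]
    tauto
  rw [hdiff]
  constructor
  · rintro ⟨h1, h2, h3⟩
    rw [hun] at h3
    exact ⟨hE _ h3 _ Finset.subset_union_right, h3⟩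
  · rintro ⟨g1, g2⟩
    refine ⟨hE _ g1 _ Finset.sdiff_subset, ?_, ?_⟩
    · rw [Finset.eq_empty_iff_forall_notMem]
      intro i hi
      rw [Finset.mem_inter, Finset.mem_sdiff] at hi
      exact hi.2.2 hi.1
    · rw [hun]
      exact g2

lemma shedding_facets {J : Finset (Finset (Fin n))} (hJ : IsSimplicialComplex J)
    {t : Finset (Fin n)} (hshed : IsSheddingFace J t) :
    ∀ G, IsFacetOf (delC J t) G → IsFacetOf J G := by
  intro G hG
  by_contra hc
  have hGJ : G ∈ J := (mem_delC.mp hG.1).1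
  have hGt : ¬ t ⊆ G := (mem_delC.mp hG.1).2
  have : ∃ G' ∈ J, G ⊆ G' ∧ G ≠ G' := by
    by_contra hc'
    push_neg at hc'
    exact hc ⟨hGJ, fun H hH hsub => hc' H hH hsub⟩
  obtain ⟨G', hG'J, hsub, hne⟩ := this
  have htG' : t ⊆ G' := by
    by_contra htc
    exact hne (hG.2 _ (mem_delC.mpr ⟨hG'J, htc⟩) hsub)
  have hGstar : G ∈ delC (starC J t) t := by
    rw [mem_delC, mem_starC]
    exact ⟨⟨hGJ, hJ _ hG'J _ (Finset.union_subset htG' hsub)⟩, hGt⟩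
  have hGfacstar : IsFacetOf (delC (starC J t) t) G := by
    refine ⟨hGstar, fun H hH hsubH => ?_⟩
    rw [mem_delC, mem_starC] at hH
    exact hG.2 _ (mem_delC.mpr ⟨hH.1.1, hH.2⟩) hsubH
  exact hshed.2 G hGfacstar hG

lemma srIdeal_powerset (H : Finset (Fin n)) :
    srIdeal K H.powerset = varIdeal K Hᶜ := by
  apply le_antisymm
  · rw [srIdeal, Ideal.span_le]
    rintro x ⟨G, hG, rfl⟩
    simp only [Set.mem_setOf_eq, Finset.mem_powerset] at hG
    obtain ⟨i, hiG, hiH⟩ := Finset.not_subset.mp hG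
    show (∏ j ∈ G, (X j : MvPolynomial (Fin n) K)) ∈ varIdeal K Hᶜ
    rw [← Finset.mul_prod_erase _ _ hiG]
    exact Ideal.mul_mem_right _ _ (X_mem_varIdeal.mpr (Finset.mem_compl.mpr hiH))
  · rw [varIdeal, Ideal.span_le]
    rintro x ⟨i, hi, rfl⟩
    have hi' : i ∉ H := Finset.mem_compl.mp hi
    have : ({i} : Finset (Fin n)) ∉ H.powerset := by
      rw [Finset.mem_powerset, Finset.singleton_subset_iff]
      exact hi'
    have himg : (X i : MvPolynomial (Fin n) K) ∈ (fun F : Finset (Fin n) =>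
        ∏ j ∈ F, (X j : MvPolynomial (Fin n) K)) '' {F | F ∉ H.powerset} := by
      refine ⟨{i}, this, ?_⟩
      show (∏ j ∈ ({i} : Finset (Fin n)), (X j : MvPolynomial (Fin n) K)) = X i
      rw [Finset.prod_singleton]
    exact Ideal.subset_span himg
  
lemma joinC_powerset (s G : Finset (Fin n)) :
    joinC s G.powerset = (s ∪ G).powerset := by
  ext F
  rw [mem_joinC, Finset.mem_powerset, Finset.mem_powerset]
  constructor
  · intro h i hi
    by_cases his : i ∈ s
    · exact Finset.mem_union_left _ his
    · exact Finset.mem_union_right _ (h (Finset.mem_sdiff.mpr ⟨hi, his⟩))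
  · intro h i hi
    rw [Finset.mem_sdiff] at hi
    rcases Finset.mem_union.mp (h hi.1) with h' | h'
    · exact absurd h' hi.2
    · exact h'

lemma linkC_empty_face (E : Finset (Finset (Fin n))) : linkC E ∅ = E := by
  ext F
  rw [mem_linkC]
  simp

end KDC
namespace KDC

open Finset

variable {K : Type*} [Field K] {n : ℕ}

lemma kdec_to_kclean {k : ℕ} {E : Finset (Finset (Fin n))} (h : KDecomposable k E) :
    ∀ s : Finset (Fin n), IsSimplicialComplex E → (∀ F ∈ E, F ∩ s = ∅) → E ≠ ∅ →
      KClean K (Fin n) k (srIdeal K (joinC s E)) := by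
  induction h with
  | empty => intro s _ _ hne; exact absurd rfl hne
  | simplex G =>
    intro s _ _ _
    rw [joinC_powerset, srIdeal_powerset]
    exact KClean.prime _ (varIdeal_isPrime _)
  | shed E t hshed hcard hlink hdel ihlink ihdel =>
    intro s hE hdisj hne
    by_cases ht0 : t = ∅
    · subst ht0
      rw [linkC_empty_face] at ihlink
      exact ihlink s hE hdisj hne
    · have htE : t ∈ E := hshed.1
      have hts : t ∩ s = ∅ := hdisj t htE
      set J := joinC s E with hJ
      have hJs : IsSimplicialComplex J := joinC_simplicial hE
      have htJ : t ∈ J := mem_joinC_of_mem hdisj htE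
      have hshedJ : IsSheddingFace J t := by
        refine ⟨htJ, ?_⟩
        intro F hF1 hF2
        have hstar : delC (starC J t) t = joinC s (delC (starC E t) t) := by
          rw [hJ, joinC_starC hts, joinC_delC hts]
        have hdel' : delC J t = joinC s (delC E t) := by rw [hJ, joinC_delC hts]
        rw [hstar] at hF1
        rw [hdel'] at hF2
        have hdisj1 : ∀ G ∈ delC (starC E t) t, G ∩ s = ∅ := fun G hG =>
          hdisj G (mem_starC.mp (mem_delC.mp hG).1).1
        have hdisj2 : ∀ G ∈ delC E t, G ∩ s = ∅ := fun G hG => hdisj G (mem_delC.mp hG).1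
        obtain ⟨G1, hG1, hFeq1⟩ := (isFacetOf_joinC hdisj1).mp hF1
        obtain ⟨G2, hG2, hFeq2⟩ := (isFacetOf_joinC hdisj2).mp hF2
        have hGeq : G1 = G2 := by
          have e1 : G1 = F \ s := by
            rw [hFeq1, Finset.union_sdiff_left, sdiff_eq_self_of_inter (hdisj1 _ hG1.1)]
          have e2 : G2 = F \ s := by
            rw [hFeq2, Finset.union_sdiff_left, sdiff_eq_self_of_inter (hdisj2 _ hG2.1)]
          rw [e1, e2]
        exact hshed.2 G1 hG1 (hGeq ▸ hG2)
      have hsum_eq : srIdeal K J + Ideal.span {monomial (expF t) (1 : K)}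
          = srIdeal K (delC J t) := sum_srIdeal hJs t
      have hcol_eq : Submodule.colon (srIdeal K J) (Ideal.span {monomial (expF t) (1 : K)})
          = srIdeal K (starC J t) := by
        have := colon_srIdeal (K := K) hJs (a := expF t)
        rwa [support_expF] at this
      refine KClean.step _ (expF t) ?_ ⟨?_, ?_, ?_⟩ ?_ ?_ ?_
      · exact noEmbeddedPrimes_srIdeal hJs
      · intro hc
        apply ht0
        have hsupp := support_expF (n := n) t
        rw [hc] at hsupp
        rw [← hsupp]
        rfl
      · rw [monomial_mem_srIdeal' hJs, support_expF]
        exact not_not_intro htJ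
      · rw [hsum_eq]
        intro P hP
        obtain ⟨F, hFfac, rfl⟩ := minimalPrime_eq_facet (delC_simplicial hJs t) hP
        exact facet_minimalPrime hJs (shedding_facets hJs hshedJ F hFfac)
      · rw [support_expF]
        exact hcard
      · rw [hcol_eq, hJ, ← joinC_linkC_star hE hts]
        refine ihlink (s ∪ t) (linkC_simplicial hE t) ?_ ?_
        · intro F hF
          obtain ⟨hFE, htF, _⟩ := mem_linkC.mp hF
          rw [Finset.eq_empty_iff_forall_notMem]
          intro i hi
          rw [Finset.mem_inter, Finset.mem_union] at hi
          rcases hi.2 with h' | h'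
          · have : i ∈ F ∩ s := Finset.mem_inter.mpr ⟨hi.1, h'⟩
            rw [hdisj F hFE] at this
            exact absurd this (Finset.notMem_empty i)
          · have : i ∈ t ∩ F := Finset.mem_inter.mpr ⟨h', hi.1⟩
            rw [htF] at this
            exact absurd this (Finset.notMem_empty i)
        · intro hc
          have hmem : (∅ : Finset (Fin n)) ∈ linkC E t := by
            rw [mem_linkC]
            exact ⟨hE _ htE _ (Finset.empty_subset t), Finset.inter_empty t, by
              rw [Finset.union_empty]; exact htE⟩
          rw [hc] at hmem
          exact absurd hmem (Finset.notMem_empty _)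
      · rw [hsum_eq, hJ, joinC_delC hts]
        refine ihdel s (delC_simplicial hE t) (fun F hF => hdisj F (mem_delC.mp hF).1) ?_
        intro hc
        have hmem : (∅ : Finset (Fin n)) ∈ delC E t := mem_delC.mpr
          ⟨hE _ htE _ (Finset.empty_subset t), fun hc' => ht0 (Finset.subset_empty.mp hc')⟩
        rw [hc] at hmem
        exact absurd hmem (Finset.notMem_empty _)

end KDC

/-- A `(d-1)`-dimensional simplicial complex `Δ` is `k`-decomposable
(`0 ≤ k ≤ d-1`) if and only if its Stanley–Reisner ideal `I_Δ` is `k`-clean. -/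
theorem kDecomposable_iff_kClean {K : Type*} [Field K] {n : ℕ}
    (D : Finset (Finset (Fin n))) (hD : IsSimplicialComplex D)
    (d : ℕ) (hdim : ∀ F ∈ D, F.card ≤ d) (hdim' : ∃ F ∈ D, F.card = d)
    (k : ℕ) (hk : k + 1 ≤ d) :
    KDecomposable k D ↔ KClean K (Fin n) k (srIdeal K D) := by
  constructor
  · intro hdec
    have hne : D ≠ ∅ := by
      obtain ⟨F, hF, _⟩ := hdim'
      intro hc
      rw [hc] at hF
      exact absurd hF (Finset.notMem_empty F)
    have hjoin : KDC.joinC ∅ D = D := by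
      ext F
      rw [KDC.mem_joinC, Finset.sdiff_empty]
    have := KDC.kdec_to_kclean (K := K) hdec ∅ hD (fun F _ => Finset.inter_empty F) hne
    rwa [hjoin] at this
  · intro hcl
    have h := KDC.kclean_to_kdec hcl D ∅ (KDC.isMonomialIdeal_srIdeal D) hD
      (KDC.srIdeal_radical hD)
    rwa [KDC.linkC_empty_face] at h
end

section
/- Every irreducible monomial ideal is 0-clean. That is, if I ⊆ S is a monomial ideal generated by pure powers of variables, I = (x_{i_1}^{a_1},…,x_{i_m}^{a_m}) with all a_j ≥ 1 and i_1,…,i_m distinct, then I is 0-clean. -/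
open MvPolynomial

namespace ZC

variable {K : Type*} [Field K] {n m : ℕ}

lemma mem_genI (ι : Fin m → Fin n) (a : Fin m → ℕ) (f : MvPolynomial (Fin n) K) :
    f ∈ Ideal.span (Set.range fun j : Fin m => (X (ι j) : MvPolynomial (Fin n) K) ^ a j) ↔
      ∀ d ∈ f.support, ∃ j, a j ≤ d (ι j) := by
  have hgen : (Set.range fun j : Fin m => (X (ι j) : MvPolynomial (Fin n) K) ^ a j)
      = (fun s => monomial s (1 : K)) '' (Set.range fun j => Finsupp.single (ι j) (a j)) := by
    rw [← Set.range_comp]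
    refine congrArg Set.range (funext fun j => ?_)
    simp [Function.comp, X_pow_eq_monomial]
  rw [hgen, mem_ideal_span_monomial_image]
  simp [Finsupp.single_le_iff]

lemma prime_span_X (ι : Fin m → Fin n) :
    (Ideal.span (Set.range fun j : Fin m => (X (ι j) : MvPolynomial (Fin n) K))).IsPrime := by
  classical
  set T : Set (Fin n) := Set.range ι with hT
  have himg : (Set.range fun j : Fin m => (X (ι j) : MvPolynomial (Fin n) K)) = X '' T := by
    rw [hT, ← Set.range_comp]; rfl
  set φ : MvPolynomial (Fin n) K →ₐ[K] MvPolynomial (Fin n) K :=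
    aeval (fun i => if i ∈ T then 0 else X i) with hφ
  have key : ∀ f : MvPolynomial (Fin n) K, f - φ f ∈ Ideal.span (X '' T) := by
    intro f
    induction f using MvPolynomial.induction_on with
    | C c => simp [hφ]
    | add p q hp hq =>
        have := Ideal.add_mem _ hp hq
        simpa [map_add, add_sub_add_comm] using this
    | mul_X p i hp =>
        by_cases hi : i ∈ T
        · have h1 : (X i : MvPolynomial (Fin n) K) ∈ Ideal.span (X '' T) :=
            Ideal.subset_span ⟨i, hi, rfl⟩
          have h0 : φ (p * X i) = 0 := by simp [hφ, hi]
          rw [h0, sub_zero]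
          exact Ideal.mul_mem_left _ _ h1
        · have h0 : φ (p * X i) = φ p * X i := by simp [hφ, hi]
          have h1 : p * X i - φ p * X i = (p - φ p) * X i := by ring
          rw [h0, h1]
          exact Ideal.mul_mem_right _ _ hp
  have hker : Ideal.span (X '' T) = RingHom.ker φ := by
    apply le_antisymm
    · rw [Ideal.span_le]
      rintro _ ⟨i, hi, rfl⟩
      simp [RingHom.mem_ker, hφ, hi]
    · intro f hf
      rw [RingHom.mem_ker] at hf
      simpa [hf] using key f
  rw [himg, hker]
  exact RingHom.ker_isPrime _

lemma radical_genI (ι : Fin m → Fin n) (a : Fin m → ℕ) (ha : ∀ j, 1 ≤ a j) :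
    (Ideal.span (Set.range fun j : Fin m => (X (ι j) : MvPolynomial (Fin n) K) ^ a j)).radical
      = Ideal.span (Set.range fun j : Fin m => (X (ι j) : MvPolynomial (Fin n) K)) := by
  apply le_antisymm
  · rw [(prime_span_X ι).radical_le_iff, Ideal.span_le]
    rintro _ ⟨j, rfl⟩
    exact Ideal.pow_mem_of_mem _ (Ideal.subset_span (Set.mem_range_self j)) (a j) (ha j)
  · rw [Ideal.span_le]
    rintro _ ⟨j, rfl⟩
    exact Ideal.mem_radical_of_pow_mem (m := a j)
      (Ideal.le_radical (Ideal.subset_span (Set.mem_range_self j)))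

set_option maxHeartbeats 1000000 in
lemma primary_genI (ι : Fin m → Fin n) (a : Fin m → ℕ) (ha : ∀ j, 1 ≤ a j) :
    (Ideal.span (Set.range fun j : Fin m =>
      (X (ι j) : MvPolynomial (Fin n) K) ^ a j)).IsPrimary := by
  classical
  rw [Ideal.isPrimary_iff]
  constructor
  · intro htop
    have h1 : (1 : MvPolynomial (Fin n) K) ∈ Ideal.span
        (Set.range fun j : Fin m => (X (ι j) : MvPolynomial (Fin n) K) ^ a j) := by
      rw [htop]; exact Submodule.mem_top
    rw [mem_genI] at h1
    obtain ⟨j, hj⟩ := h1 0 (by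
      rw [mem_support_iff]
      simp)
    simp only [Finsupp.coe_zero, Pi.zero_apply, Nat.le_zero] at hj
    exact absurd (hj ▸ ha j) (by simp)
  · intro f g hfg
    by_contra hcon
    push_neg at hcon
    obtain ⟨hf, hg⟩ := hcon
    rw [radical_genI ι a ha] at hg
    have hgch : ¬ ∀ d ∈ g.support, ∃ j, 1 ≤ d (ι j) := fun h => hg (by
      have := (mem_genI ι (fun _ : Fin m => 1) g).mpr (by simpa using h)
      simpa [pow_one] using this)
    rw [mem_genI] at hf hfg
    push_neg at hf hgch
    obtain ⟨d₀, hd₀f, hd₀bad⟩ := hf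
    obtain ⟨e₀, he₀g, he₀⟩ := hgch
    simp only [not_le, Nat.lt_one_iff] at hd₀bad he₀
    -- weight function (total degree in the variables ι j)
    set w : (Fin n →₀ ℕ) → ℕ := fun d => ∑ j : Fin m, d (ι j) with hw
    set B : Finset (Fin n →₀ ℕ) := f.support.filter (fun d => ∀ j, d (ι j) < a j) with hB
    have hBne : B.Nonempty := ⟨d₀, by simp [hB, hd₀f, hd₀bad]⟩
    obtain ⟨t, htB, htmin⟩ := B.exists_min_image w hBne
    have htbad : ∀ j, t (ι j) < a j := by
      have := (Finset.mem_filter.mp htB).2; exact this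
    have htf : t ∈ f.support := (Finset.mem_filter.mp htB).1
    set Cf : Finset (Fin n →₀ ℕ) :=
      f.support.filter (fun d => ∀ j, d (ι j) = t (ι j)) with hCf
    set Cg : Finset (Fin n →₀ ℕ) := g.support.filter (fun d => ∀ j, d (ι j) = 0) with hCg
    obtain ⟨df, hdfC, hdfmax⟩ := Cf.exists_max_image (fun d => toLex d)
      ⟨t, by simp [hCf, htf]⟩
    obtain ⟨dg, hdgC, hdgmax⟩ := Cg.exists_max_image (fun d => toLex d)
      ⟨e₀, by simp [hCg, he₀g, he₀]⟩
    have hdff : df ∈ f.support := (Finset.mem_filter.mp hdfC).1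
    have hdft : ∀ j, df (ι j) = t (ι j) := (Finset.mem_filter.mp hdfC).2
    have hdgg : dg ∈ g.support := (Finset.mem_filter.mp hdgC).1
    have hdg0 : ∀ j, dg (ι j) = 0 := (Finset.mem_filter.mp hdgC).2
    -- the key coefficient computation
    have hcoeff : (f * g).coeff (df + dg) = f.coeff df * g.coeff dg := by
      rw [coeff_mul]
      have hmem : ((df, dg) : (Fin n →₀ ℕ) × (Fin n →₀ ℕ)) ∈ Finset.HasAntidiagonal.antidiagonal (df + dg) :=
        Finset.HasAntidiagonal.mem_antidiagonal.mpr rfl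
      apply Finset.sum_eq_single_of_mem (df, dg) hmem
      · rintro ⟨p₁, p₂⟩ hpmem hpne
        rw [Finset.HasAntidiagonal.mem_antidiagonal] at hpmem
        by_contra hne0
        have hp₁ : p₁ ∈ f.support := by
          rw [mem_support_iff]; intro h; exact hne0 (by rw [h, zero_mul])
        have hp₂ : p₂ ∈ g.support := by
          rw [mem_support_iff]; intro h; exact hne0 (by rw [h, mul_zero])
        have hsumj : ∀ j, p₁ (ι j) + p₂ (ι j) = t (ι j) := by
          intro j
          have := congrArg (fun d => d (ι j)) hpmem
          simpa [Finsupp.add_apply, hdft j, hdg0 j] using this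
        have hp₁bad : ∀ j, p₁ (ι j) < a j := fun j =>
          lt_of_le_of_lt (le_trans (Nat.le_add_right _ _) (le_of_eq (hsumj j))) (htbad j)
        have hp₁B : p₁ ∈ B := by simp [hB, hp₁, hp₁bad]
        have hwp₁ : w t ≤ w p₁ := htmin p₁ hp₁B
        have hwsum : w p₁ + w p₂ = w t := by
          rw [hw]
          rw [← Finset.sum_add_distrib]
          exact Finset.sum_congr rfl fun j _ => hsumj j
        have hwp₂ : w p₂ = 0 := by omega
        have hp₂0 : ∀ j, p₂ (ι j) = 0 := by
          intro j
          have := (Finset.sum_eq_zero_iff.mp hwp₂) j (Finset.mem_univ j)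
          exact this
        have hp₁t : ∀ j, p₁ (ι j) = t (ι j) := fun j => by
          have := hsumj j; rw [hp₂0 j] at this; omega
        have hp₁C : p₁ ∈ Cf := by simp [hCf, hp₁, hp₁t]
        have hp₂C : p₂ ∈ Cg := by simp [hCg, hp₂, hp₂0]
        have hle₁ : toLex p₁ ≤ toLex df := hdfmax p₁ hp₁C
        have hle₂ : toLex p₂ ≤ toLex dg := hdgmax p₂ hp₂C
        have hlexsum : toLex p₁ + toLex p₂ = toLex df + toLex dg := by
          rw [← toLex_add, ← toLex_add, hpmem]
        have hp₁df : toLex p₁ = toLex df := by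
          by_contra hne
          have hlt : toLex p₁ < toLex df := lt_of_le_of_ne hle₁ hne
          have : toLex p₁ + toLex p₂ < toLex df + toLex dg :=
            add_lt_add_of_lt_of_le hlt hle₂
          rw [hlexsum] at this
          exact lt_irrefl _ this
        have hp₂dg : toLex p₂ = toLex dg := by
          have := hlexsum
          rw [hp₁df] at this
          exact add_left_cancel this
        exact hpne (Prod.ext (toLex.injective hp₁df) (toLex.injective hp₂dg))
    have hne : (f * g).coeff (df + dg) ≠ 0 := by
      rw [hcoeff]
      exact mul_ne_zero (mem_support_iff.mp hdff) (mem_support_iff.mp hdgg)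
    obtain ⟨j, hj⟩ := hfg (df + dg) (mem_support_iff.mpr hne)
    have : (df + dg) (ι j) = t (ι j) := by
      simp [Finsupp.add_apply, hdft j, hdg0 j]
    rw [this] at hj
    exact absurd hj (not_le.mpr (htbad j))

lemma colon_genI (ι : Fin m → Fin n) (hι : Function.Injective ι) (a : Fin m → ℕ)
    (j0 : Fin m) (h2 : 2 ≤ a j0) :
    Submodule.colon
        (Ideal.span (Set.range fun j : Fin m => (X (ι j) : MvPolynomial (Fin n) K) ^ a j))
        (Ideal.span {monomial (Finsupp.single (ι j0) (a j0 - 1)) (1 : K)})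
      = Ideal.span (Set.range fun j : Fin m =>
          (X (ι j) : MvPolynomial (Fin n) K) ^ (if j = j0 then 1 else a j)) := by
  classical
  set u : Fin n →₀ ℕ := Finsupp.single (ι j0) (a j0 - 1) with hu
  have huapp : ∀ j, u (ι j) = if j = j0 then a j0 - 1 else 0 := by
    intro j
    rw [hu, Finsupp.single_apply]
    rcases eq_or_ne j j0 with h | h
    · subst h; simp
    · rw [if_neg (fun he => h (hι he).symm), if_neg h]
  ext f
  rw [Ideal.mem_colon_span_singleton, mem_genI, mem_genI]
  have hsupp : (f * monomial u (1 : K)).support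
      = f.support.map (addRightEmbedding u) :=
    AddMonoidAlgebra.support_coeff_mul_single f _ (by simp) _
  rw [hsupp]
  constructor
  · intro h d hd
    obtain ⟨j, hj⟩ := h (d + u) (by
      rw [Finset.mem_map]
      exact ⟨d, hd, rfl⟩)
    rw [Finsupp.add_apply, huapp j] at hj
    by_cases hjj : j = j0
    · subst hjj
      refine ⟨j, ?_⟩
      rw [if_pos rfl] at hj ⊢
      omega
    · exact ⟨j, by simpa [hjj] using hj⟩
  · intro h e he
    rw [Finset.mem_map] at he
    obtain ⟨d, hd, rfl⟩ := he
    obtain ⟨j, hj⟩ := h d hd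
    refine ⟨j, ?_⟩
    rw [addRightEmbedding_apply, Finsupp.add_apply, huapp j]
    by_cases hjj : j = j0
    · subst hjj
      rw [if_pos rfl] at hj ⊢
      omega
    · simp only [if_neg hjj] at hj ⊢
      omega

lemma sum_genI (ι : Fin m → Fin n) (a : Fin m → ℕ) (ha : ∀ j, 1 ≤ a j)
    (j0 : Fin m) (h2 : 2 ≤ a j0) :
    Ideal.span (Set.range fun j : Fin m => (X (ι j) : MvPolynomial (Fin n) K) ^ a j)
        + Ideal.span {monomial (Finsupp.single (ι j0) (a j0 - 1)) (1 : K)}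
      = Ideal.span (Set.range fun j : Fin m =>
          (X (ι j) : MvPolynomial (Fin n) K) ^ (if j = j0 then a j0 - 1 else a j)) := by
  classical
  have hmon : monomial (Finsupp.single (ι j0) (a j0 - 1)) (1 : K)
      = (X (ι j0) : MvPolynomial (Fin n) K) ^ (a j0 - 1) := X_pow_eq_monomial.symm
  rw [hmon]
  apply le_antisymm
  · rw [Submodule.add_eq_sup, sup_le_iff]
    constructor
    · rw [Ideal.span_le]
      rintro _ ⟨j, rfl⟩
      show (X (ι j) : MvPolynomial (Fin n) K) ^ a j ∈ _
      by_cases hjj : j = j0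
      · subst hjj
        have hpow : (X (ι j) : MvPolynomial (Fin n) K) ^ a j
            = X (ι j) ^ (a j - 1) * X (ι j) := by
          rw [← pow_succ]
          congr 1
          omega
        rw [hpow]
        refine Ideal.mul_mem_right _ _ (Ideal.subset_span ?_)
        exact ⟨j, by simp⟩
      · exact Ideal.subset_span ⟨j, by simp [hjj]⟩
    · rw [Ideal.span_le, Set.singleton_subset_iff]
      exact Ideal.subset_span ⟨j0, by simp⟩
  · rw [Ideal.span_le]
    rintro _ ⟨j, rfl⟩
    show (X (ι j) : MvPolynomial (Fin n) K) ^ (if j = j0 then a j0 - 1 else a j) ∈ _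
    by_cases hjj : j = j0
    · subst hjj
      simp only [if_pos rfl]
      exact Ideal.mem_sup_right (Ideal.subset_span rfl)
    · simp only [if_neg hjj]
      exact Ideal.mem_sup_left (Ideal.subset_span ⟨j, rfl⟩)

lemma minimalPrimes_genI (ι : Fin m → Fin n) (a : Fin m → ℕ) (ha : ∀ j, 1 ≤ a j) :
    (Ideal.span (Set.range fun j : Fin m =>
        (X (ι j) : MvPolynomial (Fin n) K) ^ a j)).minimalPrimes
      = {Ideal.span (Set.range fun j : Fin m => (X (ι j) : MvPolynomial (Fin n) K))} := by
  rw [Ideal.minimalPrimes_eq_subsingleton (primary_genI ι a ha), radical_genI ι a ha]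

lemma main_induction (N : ℕ) : ∀ (m : ℕ) (ι : Fin m → Fin n), Function.Injective ι →
    ∀ (a : Fin m → ℕ), (∀ j, 1 ≤ a j) → (∑ j, (a j - 1)) ≤ N →
    KClean K (Fin n) 0
      (Ideal.span (Set.range fun j : Fin m => (X (ι j) : MvPolynomial (Fin n) K) ^ a j)) := by
  induction N with
  | zero =>
    intro m ι hι a ha hsum
    have h1 : ∀ j, a j = 1 := by
      intro j
      have := Finset.sum_eq_zero_iff.mp (Nat.le_zero.mp hsum) j (Finset.mem_univ j)
      have := ha j
      omega
    have : (fun j : Fin m => (X (ι j) : MvPolynomial (Fin n) K) ^ a j)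
        = fun j : Fin m => (X (ι j) : MvPolynomial (Fin n) K) := by
      funext j; rw [h1 j, pow_one]
    rw [this]
    exact KClean.prime _ (prime_span_X ι)
  | succ N IH =>
    intro m ι hι a ha hsum
    by_cases hall : ∀ j, a j = 1
    · have : (fun j : Fin m => (X (ι j) : MvPolynomial (Fin n) K) ^ a j)
          = fun j : Fin m => (X (ι j) : MvPolynomial (Fin n) K) := by
        funext j; rw [hall j, pow_one]
      rw [this]
      exact KClean.prime _ (prime_span_X ι)
    · push_neg at hall
      obtain ⟨j0, hj0⟩ := hall
      have h2 : 2 ≤ a j0 := by have := ha j0; omega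
      set u : Fin n →₀ ℕ := Finsupp.single (ι j0) (a j0 - 1) with hu
      have huapp : ∀ j, u (ι j) = if j = j0 then a j0 - 1 else 0 := by
        intro j
        rw [hu, Finsupp.single_apply]
        rcases eq_or_ne j j0 with h | h
        · subst h; simp
        · rw [if_neg (fun he => h (hι he).symm), if_neg h]
      refine KClean.step _ u ?_ ?_ ?_ ?_ ?_
      · -- no embedded primes
        intro P hP
        rw [associatedPrimes.eq_singleton_of_isPrimary (primary_genI ι a ha)] at hP
        rw [Ideal.minimalPrimes_eq_subsingleton (primary_genI ι a ha)]
        exact hP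
      · -- cleaner
        refine ⟨?_, ?_, ?_⟩
        · rw [hu]
          intro h0
          have := Finsupp.single_eq_zero.mp h0
          omega
        · rw [mem_genI]
          intro hmem
          obtain ⟨j, hj⟩ := hmem u (mem_support_iff.mpr (by simp [coeff_monomial]))
          rw [huapp j] at hj
          rcases eq_or_ne j j0 with h | h
          · subst h; rw [if_pos rfl] at hj; omega
          · rw [if_neg h] at hj; have := ha j; omega
        · rw [sum_genI ι a ha j0 h2,
            minimalPrimes_genI ι a ha,
            minimalPrimes_genI ι (fun j => if j = j0 then a j0 - 1 else a j)
              (fun j => by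
                show 1 ≤ if j = j0 then a j0 - 1 else a j
                rcases eq_or_ne j j0 with h | h
                · subst h; rw [if_pos rfl]; omega
                · rw [if_neg h]; exact ha j)]
      · -- support card
        rw [hu]
        rw [Finsupp.support_single_ne_zero _ (by omega : a j0 - 1 ≠ 0)]
        simp
      · -- colon
        rw [colon_genI ι hι a j0 h2]
        apply IH m ι hι _ (fun j => by
          show 1 ≤ if j = j0 then 1 else a j
          rcases eq_or_ne j j0 with h | h
          · subst h; rw [if_pos rfl]
          · rw [if_neg h]; exact ha j)
        have hlt : ∑ j, ((if j = j0 then 1 else a j) - 1) < ∑ j, (a j - 1) := by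
          apply Finset.sum_lt_sum
          · intro i _
            rcases eq_or_ne i j0 with h | h
            · subst h; rw [if_pos rfl]; omega
            · rw [if_neg h]
          · exact ⟨j0, Finset.mem_univ j0, by rw [if_pos rfl]; omega⟩
        exact Nat.lt_succ_iff.mp (lt_of_lt_of_le hlt hsum)
      · -- sum
        rw [sum_genI ι a ha j0 h2]
        apply IH m ι hι _ (fun j => by
          show 1 ≤ if j = j0 then a j0 - 1 else a j
          rcases eq_or_ne j j0 with h | h
          · subst h; rw [if_pos rfl]; omega
          · rw [if_neg h]; exact ha j)
        have hlt : ∑ j, ((if j = j0 then a j0 - 1 else a j) - 1) < ∑ j, (a j - 1) := by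
          apply Finset.sum_lt_sum
          · intro i _
            rcases eq_or_ne i j0 with h | h
            · subst h; rw [if_pos rfl]; omega
            · rw [if_neg h]
          · exact ⟨j0, Finset.mem_univ j0, by rw [if_pos rfl]; omega⟩
        exact Nat.lt_succ_iff.mp (lt_of_lt_of_le hlt hsum)

end ZC

/-- Every irreducible monomial ideal, i.e. an ideal generated by pure
powers of distinct variables `I = (x_{i₁}^{a₁}, …, x_{iₘ}^{aₘ})` with all `aⱼ ≥ 1`,
is `0`-clean. -/
theorem irreducible_monomial_zeroClean {K : Type*} [Field K] {n : ℕ}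
    (m : ℕ) (ι : Fin m → Fin n) (hι : Function.Injective ι)
    (a : Fin m → ℕ) (ha : ∀ j, 1 ≤ a j)
    (I : Ideal (MvPolynomial (Fin n) K))
    (hI : I = Ideal.span (Set.range fun j : Fin m => (X (ι j) : MvPolynomial (Fin n) K) ^ a j)) :
    KClean K (Fin n) 0 I := by
  subst hI
  exact ZC.main_induction (∑ j, (a j - 1)) m ι hι a ha le_rfl
end

section
/- Let I ⊆ S be a monomial complete intersection ideal, i.e., I is minimally generated by monomials M_1,…,M_r forming a regular sequence (equivalently, gcd(M_i, M_j) = 1 for all i ≠ j). Then I is 0-clean. -/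
open MvPolynomial

namespace MCIAux

variable {K : Type*} [Field K] {n : ℕ}

/-- sum of exponents -/
def deg (a : Fin n →₀ ℕ) : ℕ := ∑ l, a l

noncomputable def bIdeal {r : ℕ} (b : Fin r → (Fin n →₀ ℕ)) : Ideal (MvPolynomial (Fin n) K) :=
  Ideal.span (Set.range fun i : Fin r => (monomial (b i) (1 : K)))

noncomputable def varIdeal (K : Type*) [Field K] {n : ℕ} (s : Set (Fin n)) :
    Ideal (MvPolynomial (Fin n) K) :=
  Ideal.span (X '' s)

lemma mem_bIdeal {r : ℕ} {b : Fin r → (Fin n →₀ ℕ)} {f : MvPolynomial (Fin n) K} :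
    f ∈ (bIdeal b : Ideal (MvPolynomial (Fin n) K)) ↔ ∀ m ∈ f.support, ∃ i, b i ≤ m := by
  have : (Set.range fun i : Fin r => (monomial (b i) (1 : K)))
      = (fun a => (monomial a (1:K))) '' Set.range b := by
    rw [← Set.range_comp]; rfl
  rw [bIdeal, this, mem_ideal_span_monomial_image]
  simp

lemma mono_mem_bIdeal {r : ℕ} {b : Fin r → (Fin n →₀ ℕ)} {a : Fin n →₀ ℕ} :
    (monomial a (1:K)) ∈ (bIdeal b : Ideal (MvPolynomial (Fin n) K)) ↔ ∃ i, b i ≤ a := by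
  rw [mem_bIdeal]
  classical
  rw [support_monomial, if_neg (one_ne_zero)]
  simp

lemma mem_varIdeal {s : Set (Fin n)} {f : MvPolynomial (Fin n) K} :
    f ∈ varIdeal K s ↔ ∀ m ∈ f.support, ∃ l ∈ s, (m : Fin n →₀ ℕ) l ≠ 0 :=
  mem_ideal_span_X_image

lemma X_mem_varIdeal {s : Set (Fin n)} {l : Fin n} :
    (X l : MvPolynomial (Fin n) K) ∈ varIdeal K s ↔ l ∈ s := by
  constructor
  · intro h
    rw [mem_varIdeal] at h
    obtain ⟨l', hl', hne⟩ := h (Finsupp.single l 1) (by rw [support_X]; simp)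
    rcases eq_or_ne l' l with rfl | hll
    · exact hl'
    · simp [Finsupp.single_apply, Ne.symm hll] at hne
  · intro h; exact Ideal.subset_span ⟨l, h, rfl⟩

/-- restriction of a polynomial to monomials satisfying `p` -/
noncomputable def restr (p : (Fin n →₀ ℕ) → Prop) [DecidablePred p]
    (f : MvPolynomial (Fin n) K) : MvPolynomial (Fin n) K :=
  ∑ m ∈ f.support.filter p, monomial m (coeff m f)

lemma coeff_restr (p : (Fin n →₀ ℕ) → Prop) [DecidablePred p]
    (f : MvPolynomial (Fin n) K) (m : Fin n →₀ ℕ) :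
    coeff m (restr p f) = if p m then coeff m f else 0 := by
  classical
  rw [restr]
  rw [MvPolynomial.coeff_sum]
  simp only [coeff_monomial]
  rw [Finset.sum_ite_eq' (f.support.filter p) m (fun m' => coeff m' f)]
  simp only [Finset.mem_filter, mem_support_iff]
  by_cases hp : p m
  · by_cases hm : coeff m f = 0 <;> simp [hp, hm]
  · simp [hp]

lemma varIdeal_isPrime (s : Set (Fin n)) : (varIdeal K s).IsPrime := by
  classical
  set ρ : MvPolynomial (Fin n) K →ₐ[K] MvPolynomial (Fin n) K :=
    aeval (fun l => if l ∈ s then 0 else X l) with hρ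
  have hle : varIdeal K s ≤ RingHom.ker ρ.toRingHom := by
    rw [varIdeal, Ideal.span_le]
    rintro _ ⟨l, hl, rfl⟩
    simp [RingHom.mem_ker, hρ, hl]
  have : varIdeal K s = RingHom.ker ρ.toRingHom := by
    refine le_antisymm hle ?_
    intro f hf
    set p : (Fin n →₀ ℕ) → Prop := fun m => ∀ l ∈ s, m l = 0 with hp
    have hsub : f - restr p f ∈ varIdeal K s := by
      rw [mem_varIdeal]
      intro m hm
      rw [mem_support_iff, coeff_sub, coeff_restr] at hm
      by_cases hpm : p m
      · rw [if_pos hpm, sub_self] at hm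
        exact absurd rfl hm
      · simp only [hp, not_forall] at hpm
        obtain ⟨l, hl, hne⟩ := hpm
        exact ⟨l, hl, hne⟩
    have hfix : ρ (restr p f) = restr p f := by
      rw [restr, map_sum]
      refine Finset.sum_congr rfl ?_
      intro m hm
      rw [Finset.mem_filter] at hm
      rw [aeval_monomial]
      have : (m.prod fun l e => (if l ∈ s then 0 else X l : MvPolynomial (Fin n) K) ^ e)
          = m.prod fun l e => (X l : MvPolynomial (Fin n) K) ^ e := by
        refine Finsupp.prod_congr ?_
        intro l hl
        have : l ∉ s := by
          intro hls
          exact (Finsupp.mem_support_iff.mp hl) (hm.2 l hls)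
        rw [if_neg this]
      rw [this, monomial_eq, algebraMap_eq]
    have hker : ρ (f - restr p f) = 0 := hle hsub
    have hρf : ρ f = 0 := hf
    have h0 : restr p f = 0 := by
      have h2 : ρ (restr p f) = 0 := by
        rw [show restr p f = f - (f - restr p f) by ring, map_sub, hρf, hker, sub_zero]
      rw [← hfix, h2]
    have : f = f - restr p f := by rw [h0, sub_zero]
    rw [this]; exact hsub
  rw [this]
  exact RingHom.ker_isPrime _

lemma exists_var_mem {P : Ideal (MvPolynomial (Fin n) K)} (hP : P.IsPrime)
    {a : Fin n →₀ ℕ} (h : (monomial a (1:K)) ∈ P) : ∃ l ∈ a.support, (X l : MvPolynomial (Fin n) K) ∈ P := by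
  rw [monomial_eq, map_one, one_mul] at h
  rw [Finsupp.prod] at h
  rw [Ideal.IsPrime.prod_mem_iff] at h
  obtain ⟨l, hl, hpow⟩ := h
  exact ⟨l, hl, hP.mem_of_pow_mem _ hpow⟩


section Selectors
variable {r : ℕ} {b : Fin r → (Fin n →₀ ℕ)}
  (hb : ∀ i, b i ≠ 0) (hco : ∀ i j, i ≠ j → Disjoint (b i).support (b j).support)

lemma bIdeal_le_varIdeal {φ : Fin r → Fin n} (hφ : ∀ i, φ i ∈ (b i).support) :
    (bIdeal b : Ideal (MvPolynomial (Fin n) K)) ≤ varIdeal K (Set.range φ) := by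
  rw [bIdeal, Ideal.span_le]
  rintro _ ⟨i, rfl⟩
  rw [SetLike.mem_coe, mem_varIdeal]
  intro m hm
  classical
  rw [support_monomial, if_neg one_ne_zero, Finset.mem_singleton] at hm
  subst hm
  exact ⟨φ i, ⟨i, rfl⟩, Finsupp.mem_support_iff.mp (hφ i)⟩

include hco in
lemma sandwich {φ : Fin r → Fin n} (hφ : ∀ i, φ i ∈ (b i).support)
    {Q : Ideal (MvPolynomial (Fin n) K)} (hQ : Q.IsPrime)
    (hIQ : (bIdeal b : Ideal (MvPolynomial (Fin n) K)) ≤ Q)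
    (hQP : Q ≤ varIdeal K (Set.range φ)) : varIdeal K (Set.range φ) ≤ Q := by
  rw [varIdeal, Ideal.span_le]
  rintro _ ⟨l, ⟨i, rfl⟩, rfl⟩
  have hmono : (monomial (b i) (1:K)) ∈ Q := hIQ (Ideal.subset_span ⟨i, rfl⟩)
  obtain ⟨l', hl', hXl'⟩ := exists_var_mem hQ hmono
  obtain ⟨k, hk⟩ := (X_mem_varIdeal.mp (hQP hXl'))
  have : k = i := by
    by_contra hki
    exact (Finset.disjoint_left.mp (hco k i hki) (hk ▸ hφ k)) hl'
  rw [← this, hk]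
  exact hXl'

include hco in
lemma selector_minimal {φ : Fin r → Fin n} (hφ : ∀ i, φ i ∈ (b i).support) :
    varIdeal K (Set.range φ) ∈ (bIdeal b : Ideal (MvPolynomial (Fin n) K)).minimalPrimes := by
  constructor
  · exact ⟨varIdeal_isPrime _, bIdeal_le_varIdeal hφ⟩
  · rintro Q ⟨hQp, hQI⟩ hQle
    exact sandwich hco hφ hQp hQI hQle

omit hb hco in
lemma minimal_primes_eq {P : Ideal (MvPolynomial (Fin n) K)}
    (hP : P ∈ (bIdeal b : Ideal (MvPolynomial (Fin n) K)).minimalPrimes) :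
    ∃ φ : Fin r → Fin n, (∀ i, φ i ∈ (b i).support) ∧ P = varIdeal K (Set.range φ) := by
  obtain ⟨⟨hPp, hIP⟩, hmin⟩ := hP
  have h1 : ∀ i, ∃ l ∈ (b i).support, (X l : MvPolynomial (Fin n) K) ∈ P := by
    intro i
    exact exists_var_mem hPp (hIP (Ideal.subset_span ⟨i, rfl⟩))
  choose φ hφ1 hφ2 using h1
  refine ⟨φ, hφ1, ?_⟩
  have hle : varIdeal K (Set.range φ) ≤ P := by
    rw [varIdeal, Ideal.span_le]
    rintro _ ⟨l, ⟨i, rfl⟩, rfl⟩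
    exact hφ2 i
  have hge : P ≤ varIdeal K (Set.range φ) :=
    hmin ⟨varIdeal_isPrime _, bIdeal_le_varIdeal hφ1⟩ hle
  exact le_antisymm hge hle

end Selectors

section Primary
variable {r : ℕ} (φ : Fin r → Fin n) (a : Fin r → ℕ)

lemma nonJ_regular {c f : MvPolynomial (Fin n) K}
    (hc : c ≠ 0) (hcsupp : ∀ m ∈ c.support, ∀ i, m (φ i) = 0)
    (h : c * f ∈ (bIdeal (fun i => Finsupp.single (φ i) (a i)) : Ideal (MvPolynomial (Fin n) K))) :
    f ∈ (bIdeal (fun i => Finsupp.single (φ i) (a i)) : Ideal (MvPolynomial (Fin n) K)) := by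
  classical
  by_contra hf
  rw [mem_bIdeal] at hf
  push_neg at hf
  obtain ⟨m0, hm0, hm0lt'⟩ := hf
  have hm0lt : ∀ i, m0 (φ i) < a i := by
    intro i
    have := hm0lt' i
    rw [Finsupp.single_le_iff] at this
    omega
  set p : (Fin n →₀ ℕ) → Prop := fun m => ∀ i, m (φ i) = m0 (φ i) with hp
  set fs := restr p f with hfsdef
  have hfs0 : fs ≠ 0 := by
    intro h0
    have h1 : coeff m0 fs = coeff m0 f := by
      rw [hfsdef, coeff_restr, if_pos (fun i => rfl)]
    rw [h0, coeff_zero] at h1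
    exact (mem_support_iff.mp hm0) h1.symm
  have hcfs : c * fs ≠ 0 := mul_ne_zero hc hfs0
  obtain ⟨m1, hm1⟩ := MvPolynomial.ne_zero_iff.mp hcfs
  have hm1p : ∀ i, m1 (φ i) = m0 (φ i) := by
    have hm1s : m1 ∈ (c * fs).support := mem_support_iff.mpr hm1
    have := MvPolynomial.support_mul c fs hm1s
    rw [Finset.mem_add] at this
    obtain ⟨mc, hmc, mf, hmf, heq⟩ := this
    have hpf : p mf := by
      by_contra hnp
      have : coeff mf fs = 0 := by rw [hfsdef, coeff_restr, if_neg hnp]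
      exact (mem_support_iff.mp hmf) this
    intro i
    rw [← heq]
    rw [Finsupp.add_apply, hcsupp mc hmc i, zero_add]
    exact hpf i
  have hceq : coeff m1 (c * f) = coeff m1 (c * fs) := by
    have hsplit : c * f = c * fs + c * (f - fs) := by ring
    rw [hsplit, coeff_add]
    have hz : coeff m1 (c * (f - fs)) = 0 := by
      by_contra hne
      have hm1s : m1 ∈ (c * (f - fs)).support := mem_support_iff.mpr hne
      have := MvPolynomial.support_mul c (f - fs) hm1s
      rw [Finset.mem_add] at this
      obtain ⟨mc, hmc, mf, hmf, heq⟩ := this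
      have hnp : ¬ p mf := by
        intro hpmf
        have : coeff mf (f - fs) = 0 := by
          rw [coeff_sub, hfsdef, coeff_restr, if_pos hpmf, sub_self]
        exact (mem_support_iff.mp hmf) this
      simp only [hp, not_forall] at hnp
      obtain ⟨i, hi⟩ := hnp
      apply hi
      have := hm1p i
      rw [← heq, Finsupp.add_apply, hcsupp mc hmc i, zero_add] at this
      exact this
    rw [hz, add_zero]
  have hm1cf : m1 ∈ (c * f).support := mem_support_iff.mpr (by rw [hceq]; exact hm1)
  rw [mem_bIdeal] at h
  obtain ⟨i, hi⟩ := h m1 hm1cf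
  rw [Finsupp.single_le_iff] at hi
  have h1 := hm1p i
  have h2 := hm0lt i
  omega

lemma primary_colon {f g : MvPolynomial (Fin n) K}
    (hgf : g * f ∈ (bIdeal (fun i => Finsupp.single (φ i) (a i)) : Ideal (MvPolynomial (Fin n) K)))
    (hg : g ∉ varIdeal K (Set.range φ)) :
    f ∈ (bIdeal (fun i => Finsupp.single (φ i) (a i)) : Ideal (MvPolynomial (Fin n) K)) := by
  classical
  set Q : Ideal (MvPolynomial (Fin n) K) := bIdeal (fun i => Finsupp.single (φ i) (a i)) with hQ
  set p : (Fin n →₀ ℕ) → Prop := fun m => ∀ i, m (φ i) = 0 with hp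
  set g0 := restr p g with hg0def
  have hg0supp : ∀ m ∈ g0.support, ∀ i, m (φ i) = 0 := by
    intro m hm i
    have hcm := mem_support_iff.mp hm
    rw [hg0def, coeff_restr] at hcm
    by_cases hpm : p m
    · exact hpm i
    · rw [if_neg hpm] at hcm; exact absurd rfl hcm
  have hg0 : g0 ≠ 0 := by
    rw [mem_varIdeal] at hg
    push_neg at hg
    obtain ⟨m, hm, hmz⟩ := hg
    have hpm : p m := by
      intro i
      exact hmz (φ i) ⟨i, rfl⟩
    intro h0
    have : coeff m g0 = coeff m g := by rw [hg0def, coeff_restr, if_pos hpm]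
    rw [h0, coeff_zero] at this
    exact (mem_support_iff.mp hm) this.symm
  set g' := g - g0 with hg'def
  have hg' : g' ∈ varIdeal K (Set.range φ) := by
    rw [mem_varIdeal]
    intro m hm
    have hcm := mem_support_iff.mp hm
    rw [hg'def, coeff_sub, hg0def, coeff_restr] at hcm
    have hnp : ¬ p m := by
      intro hpm
      rw [if_pos hpm, sub_self] at hcm
      exact hcm rfl
    simp only [hp, not_forall] at hnp
    obtain ⟨i, hi⟩ := hnp
    exact ⟨φ i, ⟨i, rfl⟩, hi⟩
  have hrad : g' ∈ Q.radical := by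
    have hle : varIdeal K (Set.range φ) ≤ Q.radical := by
      rw [varIdeal, Ideal.span_le]
      rintro _ ⟨l, ⟨i, rfl⟩, rfl⟩
      show (X (φ i) : MvPolynomial (Fin n) K) ∈ Q.radical
      refine ⟨a i, ?_⟩
      rw [X_pow_eq_monomial]
      exact Ideal.subset_span ⟨i, rfl⟩
    exact hle hg'
  obtain ⟨N, hN⟩ := hrad
  have key : ∀ k : ℕ, g0 ^ k * f - (-g') ^ k * f ∈ Q := by
    intro k
    induction k with
    | zero => simpa using Q.zero_mem
    | succ k ih =>
      have hid : g0 ^ (k+1) * f - (-g') ^ (k+1) * f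
          = g0 * (g0 ^ k * f - (-g') ^ k * f) + (-g') ^ k * ((g0 + g') * f) := by ring
      have hgg : g0 + g' = g := by rw [hg'def]; ring
      rw [hid, hgg]
      exact Q.add_mem (Q.mul_mem_left _ ih) (Q.mul_mem_left _ hgf)
  have hg0N : g0 ^ N * f ∈ Q := by
    have h1 : (-g') ^ N * f ∈ Q := by
      rw [neg_pow]
      exact Q.mul_mem_right _ (Q.mul_mem_left _ hN)
    have := Q.add_mem (key N) h1
    rw [show g0 ^ N * f - (-g') ^ N * f + (-g') ^ N * f = g0 ^ N * f by ring] at this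
    exact this
  have hpowsupp : ∀ N : ℕ, ∀ m ∈ (g0 ^ N).support, ∀ i, m (φ i) = 0 := by
    intro N
    induction N with
    | zero =>
      intro m hm i
      rw [pow_zero] at hm
      have : m = 0 := by
        by_contra hne
        have := mem_support_iff.mp hm
        rw [MvPolynomial.coeff_one, if_neg (fun h => hne h.symm)] at this
        exact this rfl
      rw [this]; rfl
    | succ N ih =>
      intro m hm i
      rw [pow_succ] at hm
      have := MvPolynomial.support_mul _ _ hm
      rw [Finset.mem_add] at this
      obtain ⟨m1, hm1, m2, hm2, heq⟩ := this
      rw [← heq, Finsupp.add_apply, ih m1 hm1 i, hg0supp m2 hm2 i]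
  exact nonJ_regular φ a (pow_ne_zero N hg0) (hpowsupp N) hg0N

end Primary

section Main
variable {r : ℕ} {b : Fin r → (Fin n →₀ ℕ)}

lemma noEmbedded (hb : ∀ i, b i ≠ 0)
    (hco : ∀ i j, i ≠ j → Disjoint (b i).support (b j).support) :
    ∀ P ∈ associatedPrimes (MvPolynomial (Fin n) K)
      (MvPolynomial (Fin n) K ⧸ (bIdeal b : Ideal (MvPolynomial (Fin n) K))),
      P ∈ (bIdeal b : Ideal (MvPolynomial (Fin n) K)).minimalPrimes := by
  intro P hP
  obtain ⟨hPp, x, hx⟩ := isAssociatedPrime_iff.mp hP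
  obtain ⟨f, rfl⟩ := Ideal.Quotient.mk_surjective x
  have hmem : ∀ g, g ∈ P ↔ g * f ∈ (bIdeal b : Ideal (MvPolynomial (Fin n) K)) := by
    intro g
    rw [hx, Submodule.mem_colon_singleton, Submodule.mem_bot]
    have : g • (Ideal.Quotient.mk (bIdeal b) f)
        = Ideal.Quotient.mk (bIdeal b) (g * f) := by
      rw [← Ideal.Quotient.mk_eq_mk, ← Ideal.Quotient.mk_eq_mk, ← Submodule.Quotient.mk_smul,
        smul_eq_mul]
    rw [this, Ideal.Quotient.eq_zero_iff_mem]
  have hf : f ∉ (bIdeal b : Ideal (MvPolynomial (Fin n) K)) := by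
    intro hfI
    have h1 : (1 : MvPolynomial (Fin n) K) ∈ P := (hmem 1).mpr (by rw [one_mul]; exact hfI)
    exact hPp.ne_top ((Ideal.eq_top_iff_one _).mpr h1)
  rw [mem_bIdeal] at hf
  push_neg at hf
  obtain ⟨m0, hm0, hm0n⟩ := hf
  have hsel : ∀ i, ∃ l ∈ (b i).support, m0 l < b i l := by
    intro i
    have := hm0n i
    rw [Finsupp.le_iff] at this
    push_neg at this
    obtain ⟨l, hl1, hl2⟩ := this
    exact ⟨l, hl1, by omega⟩
  choose φ hφs hφlt using hsel
  set a : Fin r → ℕ := fun i => b i (φ i) with ha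
  have hIQ : (bIdeal b : Ideal (MvPolynomial (Fin n) K))
      ≤ bIdeal (fun i => Finsupp.single (φ i) (a i)) := by
    rw [bIdeal, Ideal.span_le]
    rintro _ ⟨i, rfl⟩
    rw [SetLike.mem_coe, mono_mem_bIdeal]
    exact ⟨i, Finsupp.single_le_iff.mpr (le_refl _)⟩
  have hPle : P ≤ varIdeal K (Set.range φ) := by
    intro g hg
    by_contra hgP
    have hfQ := primary_colon φ a (hIQ ((hmem g).mp hg)) hgP
    obtain ⟨i, hi⟩ := mem_bIdeal.mp hfQ m0 hm0
    rw [Finsupp.single_le_iff] at hi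
    have hi' : b i (φ i) ≤ m0 (φ i) := hi
    exact absurd hi' (by have := hφlt i; omega)
  have hIP : (bIdeal b : Ideal (MvPolynomial (Fin n) K)) ≤ P :=
    fun g hg => (hmem g).mpr (Ideal.mul_mem_right _ _ hg)
  have hgeq := sandwich hco hφs hPp hIP hPle
  have hPeq : P = varIdeal K (Set.range φ) := le_antisymm hPle hgeq
  rw [hPeq]
  exact selector_minimal hco hφs

variable (i0 : Fin r) (j : Fin n)

lemma sum_eq (hj : j ∈ (b i0).support) :
    (bIdeal b : Ideal (MvPolynomial (Fin n) K))
        + Ideal.span {monomial (Finsupp.single j 1) (1:K)}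
      = bIdeal (Function.update b i0 (Finsupp.single j 1)) := by
  classical
  rw [Submodule.add_eq_sup]
  apply le_antisymm
  · refine sup_le ?_ ?_
    · rw [bIdeal, Ideal.span_le]
      rintro _ ⟨i, rfl⟩
      beta_reduce
      rw [SetLike.mem_coe, mono_mem_bIdeal]
      by_cases hi : i = i0
      · subst hi
        refine ⟨i, ?_⟩
        rw [Function.update_self]
        exact Finsupp.single_le_iff.mpr (by
          have := Finsupp.mem_support_iff.mp hj; omega)
      · exact ⟨i, by rw [Function.update_of_ne hi]⟩
    · rw [Ideal.span_singleton_le_iff_mem, mono_mem_bIdeal]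
      exact ⟨i0, by rw [Function.update_self]⟩
  · rw [bIdeal, Ideal.span_le]
    rintro _ ⟨i, rfl⟩
    beta_reduce
    rw [SetLike.mem_coe]
    by_cases hi : i = i0
    · subst hi
      rw [Function.update_self]
      exact Submodule.mem_sup_right (Ideal.mem_span_singleton_self _)
    · rw [Function.update_of_ne hi]
      exact Submodule.mem_sup_left (Ideal.subset_span ⟨i, rfl⟩)

lemma colon_eq (hj : j ∈ (b i0).support)
    (hco : ∀ i j, i ≠ j → Disjoint (b i).support (b j).support) :
    Submodule.colon (bIdeal b : Ideal (MvPolynomial (Fin n) K)) (Ideal.span {monomial (Finsupp.single j 1) (1:K)})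
      = bIdeal (Function.update b i0 (b i0 - Finsupp.single j 1)) := by
  classical
  ext g
  rw [Ideal.mem_colon_span_singleton]
  constructor
  · intro h
    rw [mem_bIdeal]
    intro m hm
    have hcoeff : coeff (m + Finsupp.single j 1)
        (g * monomial (Finsupp.single j 1) (1:K)) = coeff m g := by
      rw [coeff_mul_monomial, mul_one]
    have hms : m + Finsupp.single j 1
        ∈ (g * monomial (Finsupp.single j 1) (1:K)).support :=
      mem_support_iff.mpr (by rw [hcoeff]; exact mem_support_iff.mp hm)
    obtain ⟨i, hi⟩ := mem_bIdeal.mp h _ hms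
    by_cases hii : i = i0
    · subst hii
      refine ⟨i, ?_⟩
      rw [Function.update_self, tsub_le_iff_right]
      exact hi
    · refine ⟨i, ?_⟩
      rw [Function.update_of_ne hii]
      rw [Finsupp.le_def] at hi ⊢
      intro l
      have h1 := hi l
      rw [Finsupp.add_apply, Finsupp.single_apply] at h1
      by_cases hlj : l = j
      · subst hlj
        have hj0 : b i l = 0 := Finsupp.notMem_support_iff.mp
          (Finset.disjoint_right.mp (hco i i0 hii) hj)
        omega
      · simpa [Ne.symm hlj] using h1
  · intro hg
    rw [mem_bIdeal]
    intro m hm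
    have hc := mem_support_iff.mp hm
    rw [coeff_mul_monomial'] at hc
    by_cases hle : Finsupp.single j 1 ≤ m
    · rw [if_pos hle, mul_one] at hc
      obtain ⟨i, hi⟩ := mem_bIdeal.mp hg (m - Finsupp.single j 1) (mem_support_iff.mpr hc)
      by_cases hii : i = i0
      · subst hii
        rw [Function.update_self] at hi
        refine ⟨i, ?_⟩
        rw [Finsupp.le_def] at hi hle ⊢
        intro l
        have h1 := hi l
        have h2 := hle l
        simp only [Finsupp.tsub_apply, Finsupp.single_apply] at h1 h2
        rcases eq_or_ne j l with hlj | hlj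
        · simp only [if_pos hlj] at h1 h2
          omega
        · simp only [if_neg hlj] at h1 h2
          omega
      · refine ⟨i, ?_⟩
        rw [Function.update_of_ne hii] at hi
        exact le_trans hi tsub_le_self
    · rw [if_neg hle] at hc
      exact absurd rfl hc

end Main

section Induction
variable {K : Type*} [Field K] {n : ℕ}

lemma deg_pos {a : Fin n →₀ ℕ} (ha : a ≠ 0) : 0 < deg a := by
  have : ∃ l, a l ≠ 0 := by
    by_contra h
    push_neg at h
    exact ha (Finsupp.ext h)
  obtain ⟨l, hl⟩ := this
  exact lt_of_lt_of_le (Nat.pos_of_ne_zero hl)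
    (Finset.single_le_sum (f := fun i => a i) (fun i _ => Nat.zero_le _) (Finset.mem_univ l))

lemma deg_zero : deg (0 : Fin n →₀ ℕ) = 0 := by simp [deg]

lemma deg_mono {a c : Fin n →₀ ℕ} (h : a ≤ c) : deg a ≤ deg c :=
  Finset.sum_le_sum fun l _ => Finsupp.le_def.mp h l

lemma deg_single (j : Fin n) (e : ℕ) : deg (Finsupp.single j e) = e := by
  rw [deg]
  classical
  rw [show (∑ l, Finsupp.single j e l) = ∑ l, if j = l then e else 0 from
    Finset.sum_congr rfl fun l _ => by rw [Finsupp.single_apply]]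
  rw [Finset.sum_ite_eq]
  simp

lemma deg_sub_single {a : Fin n →₀ ℕ} {j : Fin n} (hj : 1 ≤ a j) :
    deg (a - Finsupp.single j 1) + 1 = deg a := by
  classical
  have h1 : (a - Finsupp.single j 1 : Fin n →₀ ℕ) j = a j - 1 := by
    rw [Finsupp.tsub_apply, Finsupp.single_apply, if_pos rfl]
  have h2 : ∀ l ∈ Finset.univ.erase j, (a - Finsupp.single j 1 : Fin n →₀ ℕ) l = a l := by
    intro l hl
    have hne : l ≠ j := (Finset.mem_erase.mp hl).1
    rw [Finsupp.tsub_apply, Finsupp.single_apply, if_neg (fun h => hne h.symm)]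
    omega
  have h3 : ∑ l ∈ Finset.univ.erase j, (a - Finsupp.single j 1 : Fin n →₀ ℕ) l
      = ∑ l ∈ Finset.univ.erase j, a l := Finset.sum_congr rfl h2
  rw [deg, deg,
    ← Finset.add_sum_erase _ (fun l => (a - Finsupp.single j 1 : Fin n →₀ ℕ) l)
      (Finset.mem_univ j),
    ← Finset.add_sum_erase _ (fun l => a l) (Finset.mem_univ j), h1, h3]
  omega

lemma sum_deg_update (b : Fin r → (Fin n →₀ ℕ)) (i0 : Fin r) (v : Fin n →₀ ℕ) :
    ∑ i, deg (Function.update b i0 v i)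
      = deg v + ∑ i ∈ Finset.univ.erase i0, deg (b i) := by
  classical
  rw [← Finset.add_sum_erase _ (fun i => deg (Function.update b i0 v i))
    (Finset.mem_univ i0), Function.update_self]
  congr 1
  refine Finset.sum_congr rfl fun i hi => ?_
  rw [Function.update_of_ne (Finset.mem_erase.mp hi).1]

lemma main : ∀ (N r : ℕ) (b : Fin r → (Fin n →₀ ℕ)), (∀ i, b i ≠ 0) →
    (∀ i j, i ≠ j → Disjoint (b i).support (b j).support) →
    (∑ i, deg (b i)) = N →
    KClean K (Fin n) 0 (bIdeal b) := by
  intro N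
  induction N using Nat.strong_induction_on with
  | _ N ih =>
    intro r b hb hco hN
    by_cases hall : ∀ i, deg (b i) = 1
    · -- all generators are variables: the ideal is prime
      have hsingle : ∀ i, ∃ l, b i = Finsupp.single l 1 := by
        intro i
        have hpos : ∃ l, b i l ≠ 0 := by
          by_contra h
          push_neg at h
          exact hb i (Finsupp.ext h)
        obtain ⟨l, hl⟩ := hpos
        refine ⟨l, ?_⟩
        have hk : ∀ l', l' ≠ l → b i l' = 0 := by
          intro l' hl'
          by_contra hne
          have hsub : ({l, l'} : Finset (Fin n)) ⊆ Finset.univ := Finset.subset_univ _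
          have hsum := Finset.sum_le_sum_of_subset (f := fun l => b i l) hsub
          rw [Finset.sum_pair (fun h => hl' h.symm)] at hsum
          beta_reduce at hsum
          have := hall i
          rw [deg] at this
          omega
        have hl1 : b i l = 1 := by
          have := hall i
          rw [deg, ← Finset.add_sum_erase _ (fun l => b i l) (Finset.mem_univ l)] at this
          have hz : ∑ l' ∈ Finset.univ.erase l, b i l' = 0 :=
            Finset.sum_eq_zero fun l' hl' => hk l' (Finset.mem_erase.mp hl').1
          omega
        ext l'
        rcases eq_or_ne l' l with rfl | hne
        · rw [hl1, Finsupp.single_apply, if_pos rfl]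
        · rw [hk l' hne, Finsupp.single_apply, if_neg (fun h => hne h.symm)]
      choose js hjs using hsingle
      have heq : (bIdeal b : Ideal (MvPolynomial (Fin n) K)) = varIdeal K (Set.range js) := by
        rw [bIdeal, varIdeal]
        congr 1
        rw [← Set.range_comp]
        have : (fun i => monomial (b i) (1:K)) = fun i => (X ∘ js) i := by
          funext i
          rw [hjs i, Function.comp_apply, ← pow_one (X (js i) : MvPolynomial (Fin n) K),
            X_pow_eq_monomial]
        rw [this]
      rw [heq]
      exact KClean.prime _ (varIdeal_isPrime _)
    · push_neg at hall
      obtain ⟨i0, hi0⟩ := hall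
      have h2 : 2 ≤ deg (b i0) := by
        have := deg_pos (hb i0)
        omega
      have hjex : ∃ j, j ∈ (b i0).support := by
        obtain ⟨l, hl⟩ : ∃ l, b i0 l ≠ 0 := by
          by_contra h
          push_neg at h
          exact hb i0 (Finsupp.ext h)
        exact ⟨l, Finsupp.mem_support_iff.mpr hl⟩
      obtain ⟨j, hj⟩ := hjex
      have hjb : 1 ≤ b i0 j := by
        have := Finsupp.mem_support_iff.mp hj
        omega
      set b' := Function.update b i0 (Finsupp.single j 1) with hb'def
      set b'' := Function.update b i0 (b i0 - Finsupp.single j 1) with hb''def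
      have hdegsub : deg (b i0 - Finsupp.single j 1) + 1 = deg (b i0) := deg_sub_single hjb
      have hb'' : ∀ i, b'' i ≠ 0 := by
        intro i
        rw [hb''def]
        rcases eq_or_ne i i0 with rfl | hne
        · rw [Function.update_self]
          intro h0
          rw [h0, deg_zero] at hdegsub
          omega
        · rw [Function.update_of_ne hne]; exact hb i
      have hb' : ∀ i, b' i ≠ 0 := by
        intro i
        rw [hb'def]
        rcases eq_or_ne i i0 with rfl | hne
        · rw [Function.update_self]
          exact (fun h => one_ne_zero (Finsupp.single_eq_zero.mp h))
        · rw [Function.update_of_ne hne]; exact hb i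
      have hb'supp : ∀ i, (b' i).support ⊆ (b i).support := by
        intro i
        rw [hb'def]
        rcases eq_or_ne i i0 with rfl | hne
        · rw [Function.update_self, Finsupp.support_single_ne_zero _ one_ne_zero]
          intro l hl
          rw [Finset.mem_singleton] at hl
          rw [hl]
          exact hj
        · rw [Function.update_of_ne hne]
      have hb''supp : ∀ i, (b'' i).support ⊆ (b i).support := by
        intro i
        rw [hb''def]
        rcases eq_or_ne i i0 with rfl | hne
        · intro l hl
          rw [Function.update_self, Finsupp.mem_support_iff, Finsupp.tsub_apply] at hl
          rw [Finsupp.mem_support_iff]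
          omega
        · rw [Function.update_of_ne hne]
      have hco' : ∀ i k, i ≠ k → Disjoint (b' i).support (b' k).support :=
        fun i k hik => (hco i k hik).mono (hb'supp i) (hb'supp k)
      have hco'' : ∀ i k, i ≠ k → Disjoint (b'' i).support (b'' k).support :=
        fun i k hik => (hco i k hik).mono (hb''supp i) (hb''supp k)
      refine KClean.step _ (Finsupp.single j 1) ?_ ?_ ?_ ?_ ?_
      · exact noEmbedded hb hco
      · refine ⟨(fun h => one_ne_zero (Finsupp.single_eq_zero.mp h)), ?_, ?_⟩
        · rw [mono_mem_bIdeal]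
          rintro ⟨i, hi⟩
          rcases eq_or_ne i i0 with rfl | hne
          · have := deg_mono hi
            rw [deg_single] at this
            omega
          · obtain ⟨l, hl⟩ : ∃ l, b i l ≠ 0 := by
              by_contra h
              push_neg at h
              exact hb i (Finsupp.ext h)
            have h1 : b i l ≤ Finsupp.single j 1 l := Finsupp.le_def.mp hi l
            rw [Finsupp.single_apply] at h1
            have hlj : j = l := by
              by_contra hne2
              rw [if_neg hne2] at h1
              omega
            subst hlj
            exact (Finset.disjoint_left.mp (hco i i0 hne)
              (Finsupp.mem_support_iff.mpr hl)) hj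
        · rw [sum_eq i0 j hj]
          intro P hP
          obtain ⟨φ, hφ, rfl⟩ := minimal_primes_eq hP
          exact selector_minimal hco (fun i => hb'supp i (hφ i))
      · rw [Finsupp.support_single_ne_zero _ one_ne_zero, Finset.card_singleton]
      · rw [colon_eq i0 j hj hco]
        refine ih (∑ i, deg (b'' i)) ?_ r b'' hb'' hco'' rfl
        rw [hb''def, sum_deg_update]
        rw [← hN, ← Finset.add_sum_erase _ (fun i => deg (b i)) (Finset.mem_univ i0)]
        omega
      · rw [sum_eq i0 j hj]
        refine ih (∑ i, deg (b' i)) ?_ r b' hb' hco' rfl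
        rw [hb'def, sum_deg_update, deg_single]
        rw [← hN, ← Finset.add_sum_erase _ (fun i => deg (b i)) (Finset.mem_univ i0)]
        omega

end Induction

end MCIAux

/-- Every monomial complete intersection ideal, i.e. an ideal minimally
generated by pairwise coprime non-unit monomials `M₁, …, M_r` (a regular sequence),
is `0`-clean. -/
theorem monomial_complete_intersection_zeroClean {K : Type*} [Field K] {n : ℕ}
    (r : ℕ) (b : Fin r → (Fin n →₀ ℕ)) (hb : ∀ i, b i ≠ 0)
    (hcoprime : ∀ i j, i ≠ j → Disjoint (b i).support (b j).support)
    (I : Ideal (MvPolynomial (Fin n) K))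
    (hI : I = Ideal.span (Set.range fun i : Fin r => (monomial (b i) (1 : K)))) :
    KClean K (Fin n) 0 I := by
  rw [hI]
  exact MCIAux.main _ r b hb hcoprime rfl
end
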